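/- arXiv:2304.01258 — 3 statements merged into one kernel-verified Lean document; each statement's English description precedes it below -/
import Mathlib

section
/- Let k be a field of characteristic zero and let R = k[x_{ij} : 0 ≤ i < j ≤ 4] be the polynomial ring in 10 variables. For each m ∈ {0,1,2,3,4}, let a < b < c < d be the elements of {0,1,2,3,4} \ {m} and set q_m = x_{ab} x_{cd} − x_{ac} x_{bd} + x_{ad} x_{bc}. Let I = (q_0, …, q_4) and S = R/I, graded by total degree. Then for every natural number n, the k-dimension of the degree-n homogeneous component of S (the image in S of the homogeneous polynomials of degree n) equals (n+1)(n+2)²(n+3)²(n+4)/144. -/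
open MvPolynomial

/-- Index type for the 10 variables `x_{ij}`, `0 ≤ i < j ≤ 4`. -/
abbrev PlueckerIdx : Type := {p : Fin 5 × Fin 5 // p.1 < p.2}

variable (k : Type*) [Field k] [CharZero k]

/-- The variable `x_{ij}` for `i < j`. -/
noncomputable def xv (i j : Fin 5) (h : i < j) : MvPolynomial PlueckerIdx k :=
  MvPolynomial.X ⟨(i, j), h⟩

/-- The Pfaffian quadric `q_m` obtained by omitting the index `m`:
`q_m = x_{ab} x_{cd} − x_{ac} x_{bd} + x_{ad} x_{bc}` where
`a < b < c < d` are the elements of `{0,1,2,3,4} \ {m}`. -/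
noncomputable def pfaffian : Fin 5 → MvPolynomial PlueckerIdx k
  | 0 => xv k 1 2 (by decide) * xv k 3 4 (by decide)
       - xv k 1 3 (by decide) * xv k 2 4 (by decide)
       + xv k 1 4 (by decide) * xv k 2 3 (by decide)
  | 1 => xv k 0 2 (by decide) * xv k 3 4 (by decide)
       - xv k 0 3 (by decide) * xv k 2 4 (by decide)
       + xv k 0 4 (by decide) * xv k 2 3 (by decide)
  | 2 => xv k 0 1 (by decide) * xv k 3 4 (by decide)
       - xv k 0 3 (by decide) * xv k 1 4 (by decide)
       + xv k 0 4 (by decide) * xv k 1 3 (by decide)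
  | 3 => xv k 0 1 (by decide) * xv k 2 4 (by decide)
       - xv k 0 2 (by decide) * xv k 1 4 (by decide)
       + xv k 0 4 (by decide) * xv k 1 2 (by decide)
  | 4 => xv k 0 1 (by decide) * xv k 2 3 (by decide)
       - xv k 0 2 (by decide) * xv k 1 3 (by decide)
       + xv k 0 3 (by decide) * xv k 1 2 (by decide)

/-- The ideal `I = (q_0, …, q_4)`. -/
noncomputable def plueckerIdeal : Ideal (MvPolynomial PlueckerIdx k) :=
  Ideal.span (Set.range (pfaffian k))

/-- The `k`-dimension of the degree-`n` homogeneous component of `S = R/I`,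
i.e. of the image in `S` of the homogeneous polynomials of degree `n`. -/
noncomputable def plueckerDim (n : ℕ) : ℕ :=
  Module.finrank k
    ((MvPolynomial.homogeneousSubmodule PlueckerIdx k n).map
      (Ideal.Quotient.mkₐ k (plueckerIdeal k)).toLinearMap)

namespace PC


def IsChainM (m : Multiset PlueckerIdx) : Prop := ∀ a ∈ m, ∀ b ∈ m, a ≤ b ∨ b ≤ a

instance : DecidablePred IsChainM := fun m => by unfold IsChainM; infer_instance

def Fset (p : PlueckerIdx) (n : ℕ) : Finset (Sym PlueckerIdx n) :=
  Finset.univ.filter (fun m => (∀ a ∈ (m : Multiset PlueckerIdx), a ≤ p) ∧ IsChainM ↑m)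

lemma exists_max (s : Multiset PlueckerIdx) (h0 : s ≠ 0) (hc : IsChainM s) :
    ∃ q ∈ s, ∀ a ∈ s, a ≤ q := by
  induction s using Multiset.induction with
  | empty => exact absurd rfl h0
  | cons a t ih =>
    rcases eq_or_ne t 0 with rfl | ht
    · exact ⟨a, by simp⟩
    · obtain ⟨q, hqt, hq⟩ := ih ht (fun x hx y hy => hc x (by simp [hx]) y (by simp [hy]))
      rcases hc a (by simp) q (by simp [hqt]) with h | h
      · exact ⟨q, by simp [hqt], by
          intro x hx; rcases Multiset.mem_cons.1 hx with rfl | hx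
          · exact h
          · exact hq x hx⟩
      · exact ⟨a, by simp, by
          intro x hx; rcases Multiset.mem_cons.1 hx with rfl | hx
          · exact le_refl x
          · exact (hq x hx).trans h⟩

lemma card_Fset_zero (p : PlueckerIdx) : (Fset p 0).card = 1 := by
  have : Fset p 0 = (Finset.univ : Finset (Sym PlueckerIdx 0)) := by
    ext m
    have hm := Sym.eq_nil_of_card_zero m
    subst hm
    simp [Fset, IsChainM, Sym.coe_nil, Sym.eq_nil_of_card_zero]
  rw [this, Finset.card_univ, Fintype.card_unique]

lemma card_Fset_succ (p : PlueckerIdx) (n : ℕ) :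
    (Fset p (n+1)).card = ∑ q ∈ Finset.univ.filter (· ≤ p), (Fset q n).card := by
  rw [← Finset.card_sigma]
  symm
  apply Finset.card_bij (fun x _ => x.1 ::ₛ x.2)
  · rintro ⟨q, m⟩ hx
    simp only [Finset.mem_sigma, Fset, Finset.mem_filter, Finset.mem_univ, true_and] at hx
    obtain ⟨hqp, hb, hc⟩ := hx
    simp only [Fset, Finset.mem_filter, Finset.mem_univ, true_and]
    constructor
    · intro a ha
      rw [Sym.coe_cons, Multiset.mem_cons] at ha
      rcases ha with rfl | ha
      · exact hqp
      · exact (hb a ha).trans hqp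
    · intro a ha b hb'
      rw [Sym.coe_cons, Multiset.mem_cons] at ha hb'
      rcases ha with rfl | ha <;> rcases hb' with rfl | hb'
      · exact Or.inl le_rfl
      · exact Or.inr (hb _ hb')
      · exact Or.inl (hb _ ha)
      · exact hc _ ha _ hb'
  · rintro ⟨q, m⟩ hx ⟨q', m'⟩ hx' h
    simp only [Finset.mem_sigma, Fset, Finset.mem_filter, Finset.mem_univ, true_and] at hx hx'
    have hqq' : q = q' := by
      have h1 : q' ∈ q ::ₛ m := by rw [h]; exact Sym.mem_cons_self q' m'
      have h2 : q ∈ q' ::ₛ m' := by rw [← h]; exact Sym.mem_cons_self q m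
      rcases Sym.mem_cons.1 h1 with rfl | h1
      · rfl
      · rcases Sym.mem_cons.1 h2 with h2 | h2
        · exact h2
        · exact le_antisymm (hx'.2.1 q h2) (hx.2.1 q' h1)
    subst hqq'
    have hmm : m = m' := by
      have h2 := congrArg Sym.toMultiset h
      simp only [Sym.coe_cons] at h2
      exact Sym.coe_injective ((Multiset.cons_inj_right q).1 h2)
    simp [hmm]
  · intro m hm
    simp only [Fset, Finset.mem_filter, Finset.mem_univ, true_and] at hm
    obtain ⟨hb, hc⟩ := hm
    have h0 : (m : Multiset PlueckerIdx) ≠ 0 := by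
      intro h
      have hcard := m.card_coe
      rw [h] at hcard
      simp at hcard
    obtain ⟨q, hq, hmax⟩ := exists_max _ h0 hc
    refine ⟨⟨q, m.erase q hq⟩, ?_, ?_⟩
    · simp only [Finset.mem_sigma, Fset, Finset.mem_filter, Finset.mem_univ, true_and]
      refine ⟨hb q hq, ?_, ?_⟩
      · intro a ha
        have : a ∈ (m : Multiset PlueckerIdx) := Multiset.mem_of_mem_erase (by simpa [Sym.erase] using ha)
        exact hmax a this
      · intro a ha b hb'
        have ha' : a ∈ (m : Multiset PlueckerIdx) := Multiset.mem_of_mem_erase (by simpa [Sym.erase] using ha)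
        have hb'' : b ∈ (m : Multiset PlueckerIdx) := Multiset.mem_of_mem_erase (by simpa [Sym.erase] using hb')
        exact hc _ ha' _ hb''
    · exact Sym.cons_erase hq



def P01 : PlueckerIdx := ⟨(0,1), by decide⟩
def P02 : PlueckerIdx := ⟨(0,2), by decide⟩
def P03 : PlueckerIdx := ⟨(0,3), by decide⟩
def P04 : PlueckerIdx := ⟨(0,4), by decide⟩
def P12 : PlueckerIdx := ⟨(1,2), by decide⟩
def P13 : PlueckerIdx := ⟨(1,3), by decide⟩
def P14 : PlueckerIdx := ⟨(1,4), by decide⟩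
def P23 : PlueckerIdx := ⟨(2,3), by decide⟩
def P24 : PlueckerIdx := ⟨(2,4), by decide⟩
def P34 : PlueckerIdx := ⟨(3,4), by decide⟩

lemma univ_eq : (Finset.univ : Finset PlueckerIdx)
    = {P01,P02,P03,P04,P12,P13,P14,P23,P24,P34} := by decide

lemma sum_pluecker {M : Type*} [AddCommMonoid M] (g : PlueckerIdx → M) :
    ∑ q, g q = g P01 + g P02 + g P03 + g P04 + g P12 + g P13 + g P14 + g P23 + g P24 + g P34 := by
  rw [univ_eq]
  rw [Finset.sum_insert (by decide), Finset.sum_insert (by decide), Finset.sum_insert (by decide),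
    Finset.sum_insert (by decide), Finset.sum_insert (by decide), Finset.sum_insert (by decide),
    Finset.sum_insert (by decide), Finset.sum_insert (by decide), Finset.sum_insert (by decide),
    Finset.sum_singleton]
  abel

lemma mem_cases (p : PlueckerIdx) :
    p = P01 ∨ p = P02 ∨ p = P03 ∨ p = P04 ∨ p = P12 ∨ p = P13 ∨ p = P14 ∨ p = P23 ∨ p = P24 ∨ p = P34 := by
  have hp := Finset.mem_univ p
  rw [univ_eq] at hp
  simpa [Finset.mem_insert] using hp

noncomputable def f0 : ℕ → ℕ → ℕ → ℚ
  | 0, 1, n => 1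
  | 0, 2, n => (n:ℚ)+1
  | 0, 3, n => ((n:ℚ)^2+3*(n:ℚ)+2)/2
  | 0, 4, n => ((n:ℚ)^3+6*(n:ℚ)^2+11*(n:ℚ)+6)/6
  | 1, 2, n => ((n:ℚ)^2+3*(n:ℚ)+2)/2
  | 1, 3, n => (2*(n:ℚ)^3+9*(n:ℚ)^2+13*(n:ℚ)+6)/6
  | 1, 4, n => (3*(n:ℚ)^4+22*(n:ℚ)^3+57*(n:ℚ)^2+62*(n:ℚ)+24)/24
  | 2, 3, n => ((n:ℚ)^4+8*(n:ℚ)^3+23*(n:ℚ)^2+28*(n:ℚ)+12)/12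
  | 2, 4, n => ((n:ℚ)^5+10*(n:ℚ)^4+39*(n:ℚ)^3+74*(n:ℚ)^2+68*(n:ℚ)+24)/24
  | 3, 4, n => ((n:ℚ)^6+15*(n:ℚ)^5+91*(n:ℚ)^4+285*(n:ℚ)^3+484*(n:ℚ)^2+420*(n:ℚ)+144)/144
  | _, _, _ => 0


noncomputable def f (p : PlueckerIdx) (n : ℕ) : ℚ := f0 p.1.1.val p.1.2.val n

lemma f01 (n : ℕ) : f P01 n = 1 := rfl
lemma f02 (n : ℕ) : f P02 n = (n:ℚ)+1 := rfl
lemma f03 (n : ℕ) : f P03 n = ((n:ℚ)^2+3*(n:ℚ)+2)/2 := rfl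
lemma f04 (n : ℕ) : f P04 n = ((n:ℚ)^3+6*(n:ℚ)^2+11*(n:ℚ)+6)/6 := rfl
lemma f12 (n : ℕ) : f P12 n = ((n:ℚ)^2+3*(n:ℚ)+2)/2 := rfl
lemma f13 (n : ℕ) : f P13 n = (2*(n:ℚ)^3+9*(n:ℚ)^2+13*(n:ℚ)+6)/6 := rfl
lemma f14 (n : ℕ) : f P14 n = (3*(n:ℚ)^4+22*(n:ℚ)^3+57*(n:ℚ)^2+62*(n:ℚ)+24)/24 := rfl
lemma f23 (n : ℕ) : f P23 n = ((n:ℚ)^4+8*(n:ℚ)^3+23*(n:ℚ)^2+28*(n:ℚ)+12)/12 := rfl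
lemma f24 (n : ℕ) : f P24 n = ((n:ℚ)^5+10*(n:ℚ)^4+39*(n:ℚ)^3+74*(n:ℚ)^2+68*(n:ℚ)+24)/24 := rfl
lemma f34 (n : ℕ) : f P34 n = ((n:ℚ)^6+15*(n:ℚ)^5+91*(n:ℚ)^4+285*(n:ℚ)^3+484*(n:ℚ)^2+420*(n:ℚ)+144)/144 := rfl

lemma card_Fset_succ' (p : PlueckerIdx) (n : ℕ) :
    ((Fset p (n+1)).card : ℚ) = ∑ q : PlueckerIdx, if q ≤ p then ((Fset q n).card : ℚ) else 0 := by
  rw [card_Fset_succ, Finset.sum_filter]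
  push_cast
  rfl

lemma card_Fset_eq (n : ℕ) (p : PlueckerIdx) : ((Fset p n).card : ℚ) = f p n := by
  induction n generalizing p with
  | zero =>
    rw [card_Fset_zero]
    rcases mem_cases p with rfl|rfl|rfl|rfl|rfl|rfl|rfl|rfl|rfl|rfl <;>
      norm_num [f01,f02,f03,f04,f12,f13,f14,f23,f24,f34]
  | succ n ih =>
    rw [card_Fset_succ', sum_pluecker]
    simp only [ih]
    rcases mem_cases p with rfl|rfl|rfl|rfl|rfl|rfl|rfl|rfl|rfl|rfl <;>
    · simp (config := { decide := true }) only [P01,P02,P03,P04,P12,P13,P14,P23,P24,P34,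
        Subtype.mk_le_mk, Prod.mk_le_mk, ite_true, ite_false, and_true, true_and,
        and_false, false_and, if_true, if_false, le_refl]
      simp only [f01,f02,f03,f04,f12,f13,f14,f23,f24,f34, f, f0, Fin.coe_ofNat_eq_mod, Nat.reduceMod]
      push_cast
      ring


lemma plu_rel (a b c d : Fin 5) (h1 : a < b) (h2 : b < c) (h3 : c < d) :
    (X ⟨(a,b), h1⟩ * X ⟨(c,d), h3⟩ - X ⟨(a,c), h1.trans h2⟩ * X ⟨(b,d), h2.trans h3⟩
      + X ⟨(a,d), (h1.trans h2).trans h3⟩ * X ⟨(b,c), h2⟩ : MvPolynomial PlueckerIdx k)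
      ∈ plueckerIdeal k := by
  have hcl : ∀ a b c d : Fin 5, a < b → b < c → c < d →
      (a = 1 ∧ b = 2 ∧ c = 3 ∧ d = 4) ∨ (a = 0 ∧ b = 2 ∧ c = 3 ∧ d = 4) ∨
      (a = 0 ∧ b = 1 ∧ c = 3 ∧ d = 4) ∨ (a = 0 ∧ b = 1 ∧ c = 2 ∧ d = 4) ∨
      (a = 0 ∧ b = 1 ∧ c = 2 ∧ d = 3) := by decide
  rcases hcl a b c d h1 h2 h3 with ⟨rfl,rfl,rfl,rfl⟩|⟨rfl,rfl,rfl,rfl⟩|⟨rfl,rfl,rfl,rfl⟩|⟨rfl,rfl,rfl,rfl⟩|⟨rfl,rfl,rfl,rfl⟩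
  · exact Ideal.subset_span ⟨0, rfl⟩
  · exact Ideal.subset_span ⟨1, rfl⟩
  · exact Ideal.subset_span ⟨2, rfl⟩
  · exact Ideal.subset_span ⟨3, rfl⟩
  · exact Ideal.subset_span ⟨4, rfl⟩

-- ===== bridge: Tfin =====

noncomputable def Tfin (n : ℕ) : Finset (PlueckerIdx →₀ ℕ) :=
  (Fset P34 n).image (fun m => Multiset.toFinsupp m.1)

lemma card_Tfin (n : ℕ) : (Tfin n).card = (Fset P34 n).card :=
  Finset.card_image_of_injective _ (fun a b h => by
    exact Sym.coe_injective (Multiset.toFinsupp.injective h))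

lemma le_P34 (p : PlueckerIdx) : p ≤ P34 := by
  rcases mem_cases p with rfl|rfl|rfl|rfl|rfl|rfl|rfl|rfl|rfl|rfl <;> decide

lemma degree_eq_sum_id (t : PlueckerIdx →₀ ℕ) : t.degree = t.sum fun _ => id := rfl

lemma mem_Tfin {n : ℕ} {t : PlueckerIdx →₀ ℕ} :
    t ∈ Tfin n ↔ t.degree = n ∧ ∀ p ∈ t.support, ∀ q ∈ t.support, p ≤ q ∨ q ≤ p := by
  constructor
  · rintro ht
    obtain ⟨m, hm, rfl⟩ := Finset.mem_image.1 ht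
    simp only [Fset, Finset.mem_filter, Finset.mem_univ, true_and] at hm
    constructor
    · rw [degree_eq_sum_id, Multiset.toFinsupp_sum_eq]; exact m.card_coe
    · intro p hp q hq
      rw [Multiset.toFinsupp_support, Multiset.mem_toFinset] at hp hq
      exact hm.2 p hp q hq
  · rintro ⟨hdeg, hch⟩
    refine Finset.mem_image.2 ⟨Sym.mk (Finsupp.toMultiset t) ?_, ?_, ?_⟩
    · rw [Finsupp.card_toMultiset, ← degree_eq_sum_id, hdeg]
    · simp only [Fset, Finset.mem_filter, Finset.mem_univ, true_and]
      refine ⟨fun a _ => le_P34 a, ?_⟩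
      intro a ha b hb
      rw [Sym.coe_mk, Finsupp.mem_toMultiset] at ha hb
      exact hch a ha b hb
    · simp

-- ===== weights =====

def wq (p : PlueckerIdx) : ℕ := (p.1.2.val - p.1.1.val)^2

lemma weight_single_nat {σ : Type*} (w : σ → ℕ) (p : σ) (e : ℕ) :
    Finsupp.weight w (Finsupp.single p e) = e * w p := by
  simp [Finsupp.weight_apply, Finsupp.sum_single_index, smul_eq_mul]

lemma degree_add (u v : PlueckerIdx →₀ ℕ) : (u + v).degree = u.degree + v.degree := by
  simp [Finsupp.degree_eq_weight_one, map_add]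

lemma degree_single (p : PlueckerIdx) (e : ℕ) : (Finsupp.single p e).degree = e := by
  simp [Finsupp.degree_eq_weight_one, weight_single_nat]

lemma sq_ineq : ∀ d < 5, ∀ c < d, ∀ b < c, ∀ a < b,
    ((c-a)^2+(d-b)^2 < (d-a)^2+(c-b)^2 ∧ (b-a)^2+(d-c)^2 < (d-a)^2+(c-b)^2 : Prop) := by
  decide

lemma incomp {p q : PlueckerIdx} (h1 : ¬ p ≤ q) (h2 : ¬ q ≤ p) :
    (p.1.1 < q.1.1 ∧ q.1.2 < p.1.2) ∨ (q.1.1 < p.1.1 ∧ p.1.2 < q.1.2) := by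
  rw [← Subtype.coe_le_coe, Prod.le_def, not_and_or] at h1 h2
  rcases h1 with h1 | h1 <;> rcases h2 with h2 | h2 <;>
    simp only [not_le] at h1 h2 <;>
    [skip; skip; skip; skip] <;>
    first
      | exact Or.inr ⟨h1, h2⟩
      | exact Or.inl ⟨h2, h1⟩
      | exact Or.inl ⟨h2, h1.trans h2 |>.elim (fun _ => h1) (fun _ => h1) |>.elim⟩
      | (exfalso; exact absurd (le_of_lt (h1.trans h2)) (lt_irrefl _ (h1.trans h2)).le.not_lt)
      | omega

-- ===== spanning =====

variable {k}

set_option maxHeartbeats 1000000 in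
set_option synthInstance.maxHeartbeats 400000 in
lemma spanning (n : ℕ) (t : PlueckerIdx →₀ ℕ) (ht : t.degree = n) :
    Ideal.Quotient.mk (plueckerIdeal k) (monomial t 1) ∈
      Submodule.span k (Set.range fun d : ↥(Tfin n) =>
        Ideal.Quotient.mk (plueckerIdeal k) (monomial (d : PlueckerIdx →₀ ℕ) 1)) := by
  suffices H : ∀ Wv (t : PlueckerIdx →₀ ℕ), t.degree = n → Finsupp.weight wq t = Wv →
      Ideal.Quotient.mk (plueckerIdeal k) (monomial t 1) ∈
        Submodule.span k (Set.range fun d : ↥(Tfin n) =>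
          Ideal.Quotient.mk (plueckerIdeal k) (monomial (d : PlueckerIdx →₀ ℕ) 1)) by
    exact H _ t ht rfl
  intro Wv
  induction Wv using Nat.strong_induction_on with
  | _ Wv IH =>
  intro t ht hW
  subst hW
  by_cases hchain : ∀ p ∈ t.support, ∀ q ∈ t.support, p ≤ q ∨ q ≤ p
  · exact Submodule.subset_span ⟨⟨t, mem_Tfin.2 ⟨ht, hchain⟩⟩, rfl⟩
  push_neg at hchain
  obtain ⟨p, hp, q, hq, hpq, hqp⟩ := hchain
  have key : ∀ p q : PlueckerIdx, p ∈ t.support → q ∈ t.support →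
      p.1.1 < q.1.1 → q.1.2 < p.1.2 →
      Ideal.Quotient.mk (plueckerIdeal k) (monomial t 1) ∈
        Submodule.span k (Set.range fun d : ↥(Tfin n) =>
          Ideal.Quotient.mk (plueckerIdeal k) (monomial (d : PlueckerIdx →₀ ℕ) 1)) := by
    clear hp hq hpq hqp p q
    rintro ⟨⟨a, d4⟩, had⟩ ⟨⟨b, c⟩, hbc⟩ hp hq hAB hCD
    have hab : a < b := hAB
    have hcd : c < d4 := hCD
    have hbc' : b < c := hbc
    set P : PlueckerIdx := ⟨(a, d4), had⟩ with hPdef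
    set Q : PlueckerIdx := ⟨(b, c), hbc⟩ with hQdef
    have hpq' : P ≠ Q := by
      intro h
      have : a = b := congrArg (fun r : PlueckerIdx => r.1.1) h
      exact absurd (this ▸ hab) (lt_irrefl _)
    have htp : 1 ≤ t P := (Finsupp.mem_support_iff.1 hp).bot_lt
    have htq : 1 ≤ t Q := (Finsupp.mem_support_iff.1 hq).bot_lt
    have hac : a < c := hab.trans hbc'
    have hbd : b < d4 := hbc'.trans hcd
    set pac : PlueckerIdx := ⟨(a,c), hac⟩
    set pbd : PlueckerIdx := ⟨(b,d4), hbd⟩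
    set pab : PlueckerIdx := ⟨(a,b), hab⟩
    set pcd : PlueckerIdx := ⟨(c,d4), hcd⟩
    set t'' : PlueckerIdx →₀ ℕ := t - Finsupp.single P 1 - Finsupp.single Q 1 with ht''
    have hsplit : t = Finsupp.single P 1 + Finsupp.single Q 1 + t'' := by
      ext r
      rw [ht'']
      simp only [Finsupp.add_apply, Finsupp.tsub_apply, Finsupp.single_apply]
      by_cases hr1 : P = r <;> by_cases hr2 : Q = r
      · exact absurd (hr1.trans hr2.symm) hpq'
      · subst hr1; rw [if_pos rfl, if_neg hr2]; omega
      · subst hr2; rw [if_neg hr1, if_pos rfl]; omega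
      · rw [if_neg hr1, if_neg hr2]; omega
    have hmon : ∀ (r1 r2 : PlueckerIdx) (u : PlueckerIdx →₀ ℕ),
        (X r1 * X r2 * monomial u 1 : MvPolynomial PlueckerIdx k)
          = monomial (Finsupp.single r1 1 + Finsupp.single r2 1 + u) 1 := by
      intro r1 r2 u
      rw [show (X r1 : MvPolynomial PlueckerIdx k) = monomial (Finsupp.single r1 1) 1 by
            rw [← X_pow_eq_monomial, pow_one],
          show (X r2 : MvPolynomial PlueckerIdx k) = monomial (Finsupp.single r2 1) 1 by
            rw [← X_pow_eq_monomial, pow_one],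
          monomial_mul, monomial_mul, mul_one, mul_one]
    have hrel : (X pab * X pcd - X pac * X pbd + X P * X Q
        : MvPolynomial PlueckerIdx k) ∈ plueckerIdeal k :=
      plu_rel k a b c d4 hab hbc' hcd
    have hkey : (monomial t 1 : MvPolynomial PlueckerIdx k)
        = monomial (Finsupp.single pac 1 + Finsupp.single pbd 1 + t'') 1
          - monomial (Finsupp.single pab 1 + Finsupp.single pcd 1 + t'') 1
          + (X pab * X pcd - X pac * X pbd + X P * X Q) * monomial t'' 1 := by
      rw [← hmon, ← hmon, show t = Finsupp.single P 1 + Finsupp.single Q 1 + t'' from hsplit,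
        ← hmon]
      ring
    have hzero : Ideal.Quotient.mk (plueckerIdeal k)
        ((X pab * X pcd - X pac * X pbd + X P * X Q) * monomial t'' 1
          : MvPolynomial PlueckerIdx k) = 0 :=
      Ideal.Quotient.eq_zero_iff_mem.2 (Ideal.mul_mem_right _ _ hrel)
    have heq : Ideal.Quotient.mk (plueckerIdeal k) (monomial t 1)
        = Ideal.Quotient.mk (plueckerIdeal k)
            (monomial (Finsupp.single pac 1 + Finsupp.single pbd 1 + t'') 1)
          - Ideal.Quotient.mk (plueckerIdeal k)
            (monomial (Finsupp.single pab 1 + Finsupp.single pcd 1 + t'') 1) := by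
      rw [hkey, map_add, map_sub, hzero, add_zero]
    have hdeg'' : t''.degree + 2 = n := by
      rw [← ht, show t = Finsupp.single P 1 + Finsupp.single Q 1 + t'' from hsplit,
        degree_add, degree_add, degree_single, degree_single]
      omega
    have hdu1 : (Finsupp.single pac 1 + Finsupp.single pbd 1 + t'').degree = n := by
      rw [degree_add, degree_add, degree_single, degree_single]; omega
    have hdu2 : (Finsupp.single pab 1 + Finsupp.single pcd 1 + t'').degree = n := by
      rw [degree_add, degree_add, degree_single, degree_single]; omega
    have hsq := sq_ineq d4.val d4.isLt c.val hcd b.val hbc' a.val hab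
    have hWt : Finsupp.weight wq t
        = (d4.val - a.val)^2 + (c.val - b.val)^2 + Finsupp.weight wq t'' := by
      rw [show t = Finsupp.single P 1 + Finsupp.single Q 1 + t'' from hsplit,
        map_add, map_add, weight_single_nat, weight_single_nat]
      have e1 : wq P = (d4.val - a.val)^2 := rfl
      have e2 : wq Q = (c.val - b.val)^2 := rfl
      omega
    have hW1 : Finsupp.weight wq (Finsupp.single pac 1 + Finsupp.single pbd 1 + t'')
        < Finsupp.weight wq t := by
      rw [map_add, map_add, weight_single_nat, weight_single_nat, hWt]
      have e1 : wq pac = (c.val - a.val)^2 := rfl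
      have e2 : wq pbd = (d4.val - b.val)^2 := rfl
      omega
    have hW2 : Finsupp.weight wq (Finsupp.single pab 1 + Finsupp.single pcd 1 + t'')
        < Finsupp.weight wq t := by
      rw [map_add, map_add, weight_single_nat, weight_single_nat, hWt]
      have e1 : wq pab = (b.val - a.val)^2 := rfl
      have e2 : wq pcd = (d4.val - c.val)^2 := rfl
      omega
    rw [heq]
    exact sub_mem (IH _ hW1 _ hdu1 rfl) (IH _ hW2 _ hdu2 rfl)
  rcases incomp hpq hqp with ⟨h1, h2⟩ | ⟨h1, h2⟩
  · exact key p q hp hq h1 h2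
  · exact key q p hq hp h1 h2

-- ===== independence =====

lemma X_mul_X {σ : Type*} (r1 r2 : σ) :
    (X r1 * X r2 : MvPolynomial σ k) = monomial (Finsupp.single r1 1 + Finsupp.single r2 1) 1 := by
  rw [show (X r1 : MvPolynomial σ k) = monomial (Finsupp.single r1 1) 1 by
        rw [← X_pow_eq_monomial, pow_one],
      show (X r2 : MvPolynomial σ k) = monomial (Finsupp.single r2 1) 1 by
        rw [← X_pow_eq_monomial, pow_one],
      monomial_mul, mul_one]

variable (k)

noncomputable def Mp (p : PlueckerIdx) : MvPolynomial (Bool × Fin 5) k :=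
  X (false, p.1.1) * X (true, p.1.2) - X (false, p.1.2) * X (true, p.1.1)

noncomputable def phi : MvPolynomial PlueckerIdx k →ₐ[k] MvPolynomial (Bool × Fin 5) k :=
  aeval (Mp k)

lemma phi_pfaffian (m : Fin 5) : phi k (pfaffian k m) = 0 := by
  fin_cases m <;>
    · show phi k (pfaffian k _) = 0
      simp only [pfaffian, xv, phi, map_sub, map_add, map_mul, aeval_X, Mp]
      ring

lemma phi_ideal {x : MvPolynomial PlueckerIdx k} (hx : x ∈ plueckerIdeal k) : phi k x = 0 := by
  have hle : plueckerIdeal k ≤ RingHom.ker (phi k).toRingHom := by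
    rw [plueckerIdeal, Ideal.span_le]
    rintro y ⟨m, rfl⟩
    exact phi_pfaffian k m
  exact hle hx

variable {k}

def w2 : Bool × Fin 5 → ℕ := fun t => if t.1 then 0 else t.2.val

def row1 : PlueckerIdx → ℕ := fun p => p.1.1.val

noncomputable def mu (p : PlueckerIdx) : Bool × Fin 5 →₀ ℕ :=
  Finsupp.single (false, p.1.1) 1 + Finsupp.single (true, p.1.2) 1

noncomputable def Ydef (t : PlueckerIdx →₀ ℕ) : Bool × Fin 5 →₀ ℕ := t.sum fun p e => e • mu p

def Bot (f : MvPolynomial (Bool × Fin 5) k) (b : ℕ) (μ : Bool × Fin 5 →₀ ℕ) : Prop :=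
  Finsupp.weight w2 μ = b ∧ (∀ u, Finsupp.weight w2 u < b → coeff u f = 0) ∧
    (∀ u, Finsupp.weight w2 u = b → coeff u f = if u = μ then 1 else 0)

lemma bot_one : Bot (1 : MvPolynomial (Bool × Fin 5) k) 0 0 :=
  ⟨map_zero _, fun _ h => absurd h (Nat.not_lt_zero _),
   fun u _ => by rw [coeff_one]; simp [eq_comm]⟩

lemma bot_mul {f g : MvPolynomial (Bool × Fin 5) k} {b1 b2 : ℕ}
    {μ1 μ2 : Bool × Fin 5 →₀ ℕ} (hf : Bot f b1 μ1) (hg : Bot g b2 μ2) :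
    Bot (f * g) (b1 + b2) (μ1 + μ2) := by
  obtain ⟨hμ1, hlt1, heq1⟩ := hf
  obtain ⟨hμ2, hlt2, heq2⟩ := hg
  refine ⟨by rw [map_add, hμ1, hμ2], ?_, ?_⟩
  · intro u hu
    rw [coeff_mul]
    apply Finset.sum_eq_zero
    rintro ⟨x1, x2⟩ hx
    rw [Finset.HasAntidiagonal.mem_antidiagonal] at hx
    have hw : Finsupp.weight w2 x1 + Finsupp.weight w2 x2 = Finsupp.weight w2 u := by
      rw [← map_add, hx]
    rcases lt_or_ge (Finsupp.weight w2 x1) b1 with h | h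
    · rw [hlt1 _ h, zero_mul]
    · have h2 : Finsupp.weight w2 x2 < b2 := by omega
      rw [hlt2 _ h2, mul_zero]
  · intro u hu
    rw [coeff_mul]
    have step : ∀ x ∈ Finset.HasAntidiagonal.antidiagonal u,
        coeff x.1 f * coeff x.2 g = if x = (μ1, μ2) then (1:k) else 0 := by
      rintro ⟨x1, x2⟩ hx
      rw [Finset.HasAntidiagonal.mem_antidiagonal] at hx
      have hw : Finsupp.weight w2 x1 + Finsupp.weight w2 x2 = Finsupp.weight w2 u := by
        rw [← map_add, hx]
      by_cases h1 : Finsupp.weight w2 x1 < b1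
      · rw [hlt1 _ h1, zero_mul, if_neg]
        rintro h
        rw [Prod.mk.injEq] at h
        rw [h.1, hμ1] at h1
        omega
      · by_cases h2 : Finsupp.weight w2 x2 < b2
        · rw [hlt2 _ h2, mul_zero, if_neg]
          rintro h
          rw [Prod.mk.injEq] at h
          rw [h.2, hμ2] at h2
          omega
        · have e1 : Finsupp.weight w2 x1 = b1 := by omega
          have e2 : Finsupp.weight w2 x2 = b2 := by omega
          rw [heq1 _ e1, heq2 _ e2]
          by_cases hx1 : x1 = μ1 <;> by_cases hx2 : x2 = μ2 <;>
            simp [hx1, hx2, Prod.ext_iff]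
    have hstep : ∑ x ∈ Finset.HasAntidiagonal.antidiagonal u, coeff x.1 f * coeff x.2 g
        = ∑ x ∈ Finset.HasAntidiagonal.antidiagonal u, if x = (μ1, μ2) then (1:k) else 0 :=
      Finset.sum_congr rfl step
    rw [hstep, Finset.sum_ite_eq' (Finset.HasAntidiagonal.antidiagonal u) (μ1, μ2)
      (fun _ => (1:k))]
    simp only [Finset.HasAntidiagonal.mem_antidiagonal]
    by_cases h : μ1 + μ2 = u
    · rw [if_pos h, if_pos h.symm]
    · rw [if_neg h, if_neg (fun h' => h h'.symm)]

lemma bot_pow {f : MvPolynomial (Bool × Fin 5) k} {b : ℕ} {μ : Bool × Fin 5 →₀ ℕ}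
    (hf : Bot f b μ) : ∀ e, Bot (f ^ e) (e * b) (e • μ)
  | 0 => by rw [pow_zero, zero_mul, zero_smul]; exact bot_one
  | (e+1) => by
      rw [pow_succ, show (e+1) * b = e * b + b by ring, add_smul, one_smul]
      exact bot_mul (bot_pow hf e) hf

lemma wdeg_mu (p : PlueckerIdx) : Finsupp.weight w2 (mu p) = row1 p := by
  rw [mu, map_add, weight_single_nat, weight_single_nat]
  show 1 * w2 (false, p.1.1) + 1 * w2 (true, p.1.2) = row1 p
  simp [w2, row1]

lemma bot_Mp (p : PlueckerIdx) : Bot (Mp k p) (row1 p) (mu p) := by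
  have hmm : Mp k p = monomial (mu p) 1
      - monomial (Finsupp.single (false, p.1.2) 1 + Finsupp.single (true, p.1.1) 1) 1 := by
    rw [Mp, X_mul_X, X_mul_X, mu]
  set ν : Bool × Fin 5 →₀ ℕ :=
    Finsupp.single (false, p.1.2) 1 + Finsupp.single (true, p.1.1) 1 with hν
  have hwν : Finsupp.weight w2 ν = p.1.2.val := by
    rw [hν, map_add, weight_single_nat, weight_single_nat]
    show 1 * w2 (false, p.1.2) + 1 * w2 (true, p.1.1) = p.1.2.val
    simp [w2]
  have hlt : (row1 p : ℕ) < p.1.2.val := p.2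
  refine ⟨wdeg_mu p, ?_, ?_⟩
  · intro u hu
    have h1 : ¬(mu p = u) := by rintro rfl; rw [wdeg_mu] at hu; omega
    have h2 : ¬(ν = u) := by rintro rfl; rw [hwν] at hu; omega
    rw [hmm, coeff_sub, coeff_monomial, coeff_monomial, if_neg h1, if_neg h2, sub_zero]
  · intro u hu
    have h2 : ¬(ν = u) := by rintro rfl; rw [hwν] at hu; omega
    rw [hmm, coeff_sub, coeff_monomial, coeff_monomial, if_neg h2, sub_zero]
    by_cases h : u = mu p
    · rw [if_pos h.symm, if_pos h]
    · rw [if_neg (fun h' => h h'.symm), if_neg h]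

lemma bot_phi_mono (t : PlueckerIdx →₀ ℕ) :
    Bot (phi k (monomial t 1)) (Finsupp.weight row1 t) (Ydef t) := by
  have hphi : phi k (monomial t 1) = ∏ p ∈ t.support, Mp k p ^ t p := by
    rw [phi, aeval_monomial, map_one, one_mul]
    rfl
  have hw : (Finsupp.weight row1 t : ℕ) = ∑ p ∈ t.support, t p * row1 p := by
    rw [Finsupp.weight_apply]
    rfl
  have hY : Ydef t = ∑ p ∈ t.support, t p • mu p := rfl
  rw [hphi, hw, hY]
  clear hphi hw hY
  induction t.support using Finset.cons_induction with
  | empty => simpa using bot_one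
  | cons p s hp IH =>
    rw [Finset.prod_cons, Finset.sum_cons, Finset.sum_cons]
    exact bot_mul (bot_pow (bot_Mp p) (t p)) IH

lemma Yeval_false (t : PlueckerIdx →₀ ℕ) (i : Fin 5) :
    Ydef t (false, i) = ∑ p ∈ t.support, (if p.1.1 = i then t p else 0) := by
  rw [show Ydef t = ∑ p ∈ t.support, t p • mu p from rfl, Finset.sum_apply']
  refine Finset.sum_congr rfl fun p _ => ?_
  rw [Finsupp.smul_apply, smul_eq_mul, mu, Finsupp.add_apply]
  by_cases h : p.1.1 = i
  · simp [Finsupp.single_apply, Prod.ext_iff, h]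
  · simp [Finsupp.single_apply, Prod.ext_iff, h]

lemma Yeval_true (t : PlueckerIdx →₀ ℕ) (j : Fin 5) :
    Ydef t (true, j) = ∑ p ∈ t.support, (if p.1.2 = j then t p else 0) := by
  rw [show Ydef t = ∑ p ∈ t.support, t p • mu p from rfl, Finset.sum_apply']
  refine Finset.sum_congr rfl fun p _ => ?_
  rw [Finsupp.smul_apply, smul_eq_mul, mu, Finsupp.add_apply]
  by_cases h : p.1.2 = j
  · simp [Finsupp.single_apply, Prod.ext_iff, h]
  · simp [Finsupp.single_apply, Prod.ext_iff, h]

lemma Ypos_false {t : PlueckerIdx →₀ ℕ} {p : PlueckerIdx} (hp : p ∈ t.support) :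
    0 < Ydef t (false, p.1.1) := by
  rw [Yeval_false]
  have h1 : (if p.1.1 = p.1.1 then t p else 0) ≤ ∑ q ∈ t.support, (if q.1.1 = p.1.1 then t q else 0) :=
    Finset.single_le_sum (f := fun q : PlueckerIdx => if q.1.1 = p.1.1 then t q else 0)
      (fun _ _ => Nat.zero_le _) hp
  rw [if_pos rfl] at h1
  have := (Finsupp.mem_support_iff.1 hp).bot_lt
  omega

lemma Ypos_true {t : PlueckerIdx →₀ ℕ} {p : PlueckerIdx} (hp : p ∈ t.support) :
    0 < Ydef t (true, p.1.2) := by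
  rw [Yeval_true]
  have h1 : (if p.1.2 = p.1.2 then t p else 0) ≤ ∑ q ∈ t.support, (if q.1.2 = p.1.2 then t q else 0) :=
    Finset.single_le_sum (f := fun q : PlueckerIdx => if q.1.2 = p.1.2 then t q else 0)
      (fun _ _ => Nat.zero_le _) hp
  rw [if_pos rfl] at h1
  have := (Finsupp.mem_support_iff.1 hp).bot_lt
  omega

lemma Yex_false {t : PlueckerIdx →₀ ℕ} {i : Fin 5} (h : 0 < Ydef t (false, i)) :
    ∃ p ∈ t.support, p.1.1 = i := by
  by_contra hc
  push_neg at hc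
  rw [Yeval_false, Finset.sum_eq_zero (fun p hp => if_neg (hc p hp))] at h
  omega

lemma Yex_true {t : PlueckerIdx →₀ ℕ} {j : Fin 5} (h : 0 < Ydef t (true, j)) :
    ∃ p ∈ t.support, p.1.2 = j := by
  by_contra hc
  push_neg at hc
  rw [Yeval_true, Finset.sum_eq_zero (fun p hp => if_neg (hc p hp))] at h
  omega

lemma Ydef_add (u v : PlueckerIdx →₀ ℕ) : Ydef (u + v) = Ydef u + Ydef v := by
  rw [Ydef, Ydef, Ydef]
  exact Finsupp.sum_add_index' (fun p => by simp) (fun p e1 e2 => add_smul e1 e2 (mu p))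

lemma Ydef_single (p : PlueckerIdx) : Ydef (Finsupp.single p 1) = mu p := by
  rw [Ydef, Finsupp.sum_single_index (by simp), one_smul]

lemma Y_inj : ∀ N (t t' : PlueckerIdx →₀ ℕ), t.degree ≤ N →
    (∀ p ∈ t.support, ∀ q ∈ t.support, p ≤ q ∨ q ≤ p) →
    (∀ p ∈ t'.support, ∀ q ∈ t'.support, p ≤ q ∨ q ≤ p) →
    Ydef t = Ydef t' → t = t' := by
  intro N
  induction N with
  | zero =>
    intro t t' hN hc hc' hY
    have ht0 : t = 0 := by
      rw [← Finsupp.degree_eq_zero_iff]; omega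
    subst ht0
    by_contra h
    obtain ⟨p, hp⟩ := Finsupp.support_nonempty_iff.2 (fun h' => h h'.symm)
    have := Ypos_false hp
    rw [← hY] at this
    rw [show Ydef 0 = 0 by rw [Ydef, Finsupp.sum_zero_index]] at this
    simp at this
  | succ N IHN =>
    intro t t' hN hc hc' hY
    by_cases ht0 : t = 0
    · subst ht0
      by_contra h
      obtain ⟨p, hp⟩ := Finsupp.support_nonempty_iff.2 (fun h' => h h'.symm)
      have := Ypos_false hp
      rw [← hY] at this
      rw [show Ydef 0 = 0 by rw [Ydef, Finsupp.sum_zero_index]] at this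
      simp at this
    have ht'0 : t' ≠ 0 := by
      intro h'
      subst h'
      obtain ⟨p, hp⟩ := Finsupp.support_nonempty_iff.2 ht0
      have := Ypos_false hp
      rw [hY] at this
      rw [show Ydef 0 = 0 by rw [Ydef, Finsupp.sum_zero_index]] at this
      simp at this
    -- maxima
    obtain ⟨P, hPmem, hPmax⟩ := exists_max t.support.val
      (by simpa using (Finsupp.support_nonempty_iff.2 ht0).ne_empty ∘ Finset.val_eq_zero.1)
      (fun a ha b hb => hc a ha b hb)
    obtain ⟨Q, hQmem, hQmax⟩ := exists_max t'.support.val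
      (by simpa using (Finsupp.support_nonempty_iff.2 ht'0).ne_empty ∘ Finset.val_eq_zero.1)
      (fun a ha b hb => hc' a ha b hb)
    have hPQ : P = Q := by
      have h1 : P.1.1 ≤ Q.1.1 := by
        obtain ⟨p', hp', he⟩ := Yex_false (t := t') (i := P.1.1)
          (by rw [← hY]; exact Ypos_false hPmem)
        have := hQmax p' hp'
        rw [← Subtype.coe_le_coe, Prod.le_def] at this
        exact he ▸ this.1
      have h2 : Q.1.1 ≤ P.1.1 := by
        obtain ⟨p', hp', he⟩ := Yex_false (t := t) (i := Q.1.1)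
          (by rw [hY]; exact Ypos_false hQmem)
        have := hPmax p' hp'
        rw [← Subtype.coe_le_coe, Prod.le_def] at this
        exact he ▸ this.1
      have h3 : P.1.2 ≤ Q.1.2 := by
        obtain ⟨p', hp', he⟩ := Yex_true (t := t') (j := P.1.2)
          (by rw [← hY]; exact Ypos_true hPmem)
        have := hQmax p' hp'
        rw [← Subtype.coe_le_coe, Prod.le_def] at this
        exact he ▸ this.2
      have h4 : Q.1.2 ≤ P.1.2 := by
        obtain ⟨p', hp', he⟩ := Yex_true (t := t) (j := Q.1.2)
          (by rw [hY]; exact Ypos_true hQmem)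
        have := hPmax p' hp'
        rw [← Subtype.coe_le_coe, Prod.le_def] at this
        exact he ▸ this.2
      exact Subtype.ext (Prod.ext (le_antisymm h1 h2) (le_antisymm h3 h4))
    subst hPQ
    -- peel off P
    have htP : 1 ≤ t P := (Finsupp.mem_support_iff.1 hPmem).bot_lt
    have htP' : 1 ≤ t' P := (Finsupp.mem_support_iff.1 hQmem).bot_lt
    set s := t - Finsupp.single P 1 with hs
    set s' := t' - Finsupp.single P 1 with hs'
    have hts : s + Finsupp.single P 1 = t := by
      rw [hs]
      exact tsub_add_cancel_of_le (Finsupp.single_le_iff.2 htP)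
    have hts' : s' + Finsupp.single P 1 = t' := by
      rw [hs']
      exact tsub_add_cancel_of_le (Finsupp.single_le_iff.2 htP')
    have hsub : s.support ⊆ t.support := by
      intro r hr
      rw [Finsupp.mem_support_iff] at hr ⊢
      rw [hs, Finsupp.tsub_apply] at hr
      omega
    have hsub' : s'.support ⊆ t'.support := by
      intro r hr
      rw [Finsupp.mem_support_iff] at hr ⊢
      rw [hs', Finsupp.tsub_apply] at hr
      omega
    have hdeg : s.degree ≤ N := by
      have h1 : t.degree = s.degree + 1 := by
        rw [← hts, degree_add, degree_single]
      omega
    have hYs : Ydef s = Ydef s' := by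
      have e1 : Ydef t = Ydef s + mu P := by rw [← hts, Ydef_add, Ydef_single]
      have e2 : Ydef t' = Ydef s' + mu P := by rw [← hts', Ydef_add, Ydef_single]
      rw [e1, e2] at hY
      exact add_right_cancel hY
    have hss' : s = s' :=
      IHN s s' hdeg (fun a ha b hb => hc a (hsub ha) b (hsub hb))
        (fun a ha b hb => hc' a (hsub' ha) b (hsub' hb)) hYs
    rw [← hts, ← hts', hss']

-- ===== linear independence of standard monomials =====

lemma chain_of_mem_Tfin {n : ℕ} (i : ↥(Tfin n)) :
    ∀ p ∈ (i : PlueckerIdx →₀ ℕ).support, ∀ q ∈ (i : PlueckerIdx →₀ ℕ).support,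
      p ≤ q ∨ q ≤ p := (mem_Tfin.1 i.2).2

set_option synthInstance.maxHeartbeats 400000 in
lemma lin_indep (n : ℕ) : LinearIndependent k
    (fun d : ↥(Tfin n) =>
      Ideal.Quotient.mkₐ k (plueckerIdeal k) (monomial (d : PlueckerIdx →₀ ℕ) 1)) := by
  rw [Fintype.linearIndependent_iff]
  intro g hg
  set Pp : MvPolynomial PlueckerIdx k :=
    ∑ i : ↥(Tfin n), g i • monomial (i : PlueckerIdx →₀ ℕ) 1 with hPp
  have hmk : Ideal.Quotient.mkₐ k (plueckerIdeal k) Pp = 0 := by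
    rw [hPp, map_sum]
    simp_rw [map_smul]
    exact hg
  have hPmem : Pp ∈ plueckerIdeal k := by
    rwa [Ideal.Quotient.mkₐ_eq_mk, Ideal.Quotient.eq_zero_iff_mem] at hmk
  have hphi0 : phi k Pp = 0 := phi_ideal k hPmem
  suffices H : ∀ s, ∀ i : ↥(Tfin n), Finsupp.weight row1 (i : PlueckerIdx →₀ ℕ) = s → g i = 0 by
    exact fun i => H _ i rfl
  intro s
  induction s using Nat.strong_induction_on with
  | _ s IH =>
  intro i0 hs
  have hwY0 : Finsupp.weight w2 (Ydef (i0 : PlueckerIdx →₀ ℕ)) = s := by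
    rw [(bot_phi_mono (k := k) (i0 : PlueckerIdx →₀ ℕ)).1, hs]
  have hterm : ∀ i : ↥(Tfin n),
      g i * coeff (Ydef (i0 : PlueckerIdx →₀ ℕ)) (phi k (monomial (i : PlueckerIdx →₀ ℕ) 1))
        = if i = i0 then g i0 else 0 := by
    intro i
    obtain ⟨hbw, hblt, hbeq⟩ := bot_phi_mono (k := k) (i : PlueckerIdx →₀ ℕ)
    rcases lt_trichotomy (Finsupp.weight row1 (i : PlueckerIdx →₀ ℕ)) s with hlt | heq | hgt
    · rw [IH _ hlt i rfl, zero_mul, if_neg]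
      rintro rfl
      omega
    · rw [hbeq _ (by rw [hwY0, heq])]
      by_cases hY : Ydef (i0 : PlueckerIdx →₀ ℕ) = Ydef (i : PlueckerIdx →₀ ℕ)
      · have hii : (i : PlueckerIdx →₀ ℕ) = (i0 : PlueckerIdx →₀ ℕ) :=
          Y_inj (i : PlueckerIdx →₀ ℕ).degree _ _ le_rfl (chain_of_mem_Tfin i)
            (chain_of_mem_Tfin i0) hY.symm
        have hii0 : i = i0 := Subtype.ext hii
        rw [if_pos hY, hii0, if_pos rfl, mul_one]
      · rw [if_neg hY, mul_zero, if_neg]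
        rintro rfl
        exact hY rfl
    · rw [hblt _ (by omega), mul_zero, if_neg]
      rintro rfl
      omega
  have hzero : (0 : k) = g i0 := by
    calc (0 : k) = coeff (Ydef (i0 : PlueckerIdx →₀ ℕ)) (phi k Pp) := by
          rw [hphi0, coeff_zero]
      _ = ∑ i : ↥(Tfin n), g i * coeff (Ydef (i0 : PlueckerIdx →₀ ℕ))
            (phi k (monomial (i : PlueckerIdx →₀ ℕ) 1)) := by
          rw [hPp, map_sum, coeff_sum]
          refine Finset.sum_congr rfl fun i _ => ?_
          rw [map_smul, coeff_smul, smul_eq_mul]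
      _ = ∑ i : ↥(Tfin n), if i = i0 then g i0 else 0 :=
          Finset.sum_congr rfl fun i _ => hterm i
      _ = g i0 := by rw [Finset.sum_ite_eq' Finset.univ i0 (fun _ => g i0)]; simp
  exact hzero.symm

-- ===== span equality and dimension =====

lemma span_eq (n : ℕ) :
    (MvPolynomial.homogeneousSubmodule PlueckerIdx k n).map
        (Ideal.Quotient.mkₐ k (plueckerIdeal k)).toLinearMap
      = Submodule.span k (Set.range fun d : ↥(Tfin n) =>
          Ideal.Quotient.mkₐ k (plueckerIdeal k) (monomial (d : PlueckerIdx →₀ ℕ) 1)) := by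
  apply le_antisymm
  · rintro x hx
    obtain ⟨p, hp, rfl⟩ := Submodule.mem_map.1 hx
    rw [mem_homogeneousSubmodule] at hp
    rw [AlgHom.toLinearMap_apply, ← support_sum_monomial_coeff p, map_sum]
    apply Submodule.sum_mem
    intro d hd
    have hdeg : d.degree = n := by
      have h1 := hp (MvPolynomial.mem_support_iff.1 hd)
      rw [Finsupp.degree_eq_weight_one]
      exact h1
    have hmem := spanning (n := n) d hdeg (k := k)
    have hsm : (monomial d (coeff d p) : MvPolynomial PlueckerIdx k)
        = coeff d p • monomial d 1 := by
      rw [smul_monomial, smul_eq_mul, mul_one]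
    rw [hsm, map_smul]
    refine Submodule.smul_mem _ _ ?_
    simpa [Ideal.Quotient.mkₐ_eq_mk] using hmem
  · rw [Submodule.span_le]
    rintro x ⟨d, rfl⟩
    exact ⟨monomial (d : PlueckerIdx →₀ ℕ) 1,
      (mem_homogeneousSubmodule _ _).2
        (isHomogeneous_monomial _ (mem_Tfin.1 d.2).1), rfl⟩

end PC

theorem stmt2 (n : ℕ) :
    plueckerDim k n = (n + 1) * (n + 2) ^ 2 * (n + 3) ^ 2 * (n + 4) / 144 := by
  have hdim : plueckerDim k n = (PC.Fset PC.P34 n).card := by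
    rw [plueckerDim, PC.span_eq, finrank_span_eq_card (PC.lin_indep (k := k) n),
      Fintype.card_coe, PC.card_Tfin]
  have hq := PC.card_Fset_eq n PC.P34
  rw [PC.f34] at hq
  have hnat : 144 * (PC.Fset PC.P34 n).card
      = (n + 1) * (n + 2) ^ 2 * (n + 3) ^ 2 * (n + 4) := by
    have hcast : ((144 * (PC.Fset PC.P34 n).card : ℕ) : ℚ)
        = (((n + 1) * (n + 2) ^ 2 * (n + 3) ^ 2 * (n + 4) : ℕ) : ℚ) := by
      push_cast
      rw [hq]
      field_simp
      ring
    exact_mod_cast hcast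
  rw [hdim]
  omega
end

section
/- Let k be a field of characteristic zero and let R = k[x_{ij} : 0 ≤ i < j ≤ 4] be the polynomial ring in 10 variables. For each m ∈ {0,1,2,3,4}, let a < b < c < d be the elements of {0,1,2,3,4} \ {m} and set q_m = x_{ab} x_{cd} − x_{ac} x_{bd} + x_{ad} x_{bc}. Let I = (q_0, …, q_4) and S = R/I, graded by total degree, and let a_n denote the k-dimension of the degree-n homogeneous component of S. Then in the formal power series ring ℤ[[t]] one has (Σ_{n≥0} a_n t^n) · (1 − t)^{10} = 1 − 5t² + 5t³ − t⁵. -/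
open MvPolynomial

variable (k : Type*) [Field k] [CharZero k]

namespace Pl

/-! ### Basic combinatorial data -/

/-- elements of `PlueckerIdx` -/
def el (i j : Fin 5) (h : i < j := by decide) : PlueckerIdx := ⟨(i, j), h⟩

/-- the three terms of each Pfaffian: `q m = xA1*xA2 - xB1*xB2 + xC1*xC2`,
where `(C1 m, C2 m)` is the unique incomparable (bad) pair. -/
def A1 : Fin 5 → PlueckerIdx | 0 => el 1 2 | 1 => el 0 2 | 2 => el 0 1 | 3 => el 0 1 | 4 => el 0 1
def A2 : Fin 5 → PlueckerIdx | 0 => el 3 4 | 1 => el 3 4 | 2 => el 3 4 | 3 => el 2 4 | 4 => el 2 3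
def B1 : Fin 5 → PlueckerIdx | 0 => el 1 3 | 1 => el 0 3 | 2 => el 0 3 | 3 => el 0 2 | 4 => el 0 2
def B2 : Fin 5 → PlueckerIdx | 0 => el 2 4 | 1 => el 2 4 | 2 => el 1 4 | 3 => el 1 4 | 4 => el 1 3
def C1 : Fin 5 → PlueckerIdx | 0 => el 1 4 | 1 => el 0 4 | 2 => el 0 4 | 3 => el 0 4 | 4 => el 0 3
def C2 : Fin 5 → PlueckerIdx | 0 => el 2 3 | 1 => el 2 3 | 2 => el 1 3 | 3 => el 1 2 | 4 => el 1 2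

lemma pfaffian_eq (m : Fin 5) :
    pfaffian k m = X (A1 m) * X (A2 m) - X (B1 m) * X (B2 m) + X (C1 m) * X (C2 m) := by
  fin_cases m <;> rfl

/-- standard exponents: support is a chain -/
def Std (w : PlueckerIdx →₀ ℕ) : Prop :=
  ∀ p ∈ w.support, ∀ q ∈ w.support, p ≤ q ∨ q ≤ p

/-- straightening measure weight -/
def mes (p : PlueckerIdx) : ℕ := (p.1.2.val - p.1.1.val) ^ 2

/-- measure of an exponent -/
def M (w : PlueckerIdx →₀ ℕ) : ℕ := w.sum fun p m => m * mes p

lemma incomp_bad {p q : PlueckerIdx} (h : ¬(p ≤ q ∨ q ≤ p)) :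
    ∃ m, (p = C1 m ∧ q = C2 m) ∨ (p = C2 m ∧ q = C1 m) := by
  revert h; revert p q; decide

lemma mes_dec (m : Fin 5) :
    mes (B1 m) + mes (B2 m) < mes (C1 m) + mes (C2 m) ∧
    mes (A1 m) + mes (A2 m) < mes (C1 m) + mes (C2 m) ∧
    C1 m ≠ C2 m ∧ A1 m ≠ A2 m ∧ B1 m ≠ B2 m := by
  fin_cases m <;> decide

end Pl

namespace Pl
open Finsupp

lemma degree_add (a b : PlueckerIdx →₀ ℕ) : (a + b).degree = a.degree + b.degree := by
  simp [Finsupp.degree_eq_weight_one, map_add]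

lemma degree_single (p : PlueckerIdx) : (Finsupp.single p (1:ℕ)).degree = 1 := by
  exact Finsupp.degree_single p 1

lemma M_add (a b : PlueckerIdx →₀ ℕ) : M (a + b) = M a + M b := by
  unfold M
  exact Finsupp.sum_add_index' (fun p => by simp) (fun p m1 m2 => add_mul m1 m2 (mes p))

lemma M_single (p : PlueckerIdx) : M (Finsupp.single p 1) = mes p := by
  unfold M
  rw [Finsupp.sum_single_index] <;> simp

lemma mon_two (R : Type*) [CommRing R] (a b : PlueckerIdx) (w' : PlueckerIdx →₀ ℕ) :
    (monomial (w' + Finsupp.single a 1 + Finsupp.single b 1) 1 : MvPolynomial PlueckerIdx R)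
      = X a * X b * monomial w' 1 := by
  rw [X, X, monomial_mul, monomial_mul]
  congr 1
  · abel
  · ring

variable {k}

lemma decomp {w : PlueckerIdx →₀ ℕ} {a b : PlueckerIdx} (hab : a ≠ b)
    (ha : a ∈ w.support) (hb : b ∈ w.support) :
    w = (w - Finsupp.single a 1 - Finsupp.single b 1) + Finsupp.single a 1 + Finsupp.single b 1 := by
  have ha' : 1 ≤ w a := Nat.pos_of_ne_zero (Finsupp.mem_support_iff.mp ha)
  have hb' : 1 ≤ w b := Nat.pos_of_ne_zero (Finsupp.mem_support_iff.mp hb)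
  ext q
  simp only [Finsupp.add_apply, Finsupp.tsub_apply, Finsupp.single_apply]
  by_cases h1 : a = q <;> by_cases h2 : b = q
  · exact absurd (h1.trans h2.symm) hab
  · subst h1; rw [if_pos rfl, if_neg h2]; omega
  · subst h2; rw [if_pos rfl, if_neg h1]; omega
  · rw [if_neg h1, if_neg h2]; omega

end Pl
namespace Pl
open Finsupp

variable {k}

/-- straightening: every monomial image lies in the span of standard monomial images -/
lemma straighten_aux (n N : ℕ) :
    ∀ w : PlueckerIdx →₀ ℕ, M w < N → w.degree = n →
      (Ideal.Quotient.mkₐ k (plueckerIdeal k)) (monomial w 1) ∈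
        Submodule.span k
          ((fun u => (Ideal.Quotient.mkₐ k (plueckerIdeal k)) (monomial u 1)) ''
            {u | Std u ∧ u.degree = n}) := by
  induction N with
  | zero => intro w hM _; omega
  | succ N ih =>
    intro w hM hdeg
    by_cases hstd : Std w
    · exact Submodule.subset_span ⟨w, ⟨hstd, hdeg⟩, rfl⟩
    · unfold Std at hstd
      push_neg at hstd
      obtain ⟨p, hp, q, hq, hpq⟩ := hstd
      obtain ⟨m, hm⟩ := incomp_bad (not_or.mpr hpq)
      have hC1 : C1 m ∈ w.support := by rcases hm with ⟨rfl, rfl⟩ | ⟨rfl, rfl⟩ <;> assumption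
      have hC2 : C2 m ∈ w.support := by rcases hm with ⟨rfl, rfl⟩ | ⟨rfl, rfl⟩ <;> assumption
      obtain ⟨hBlt, hAlt, hCne, hAne, hBne⟩ := mes_dec m
      set w' := w - Finsupp.single (C1 m) 1 - Finsupp.single (C2 m) 1 with hw'
      have hwdec : w = w' + Finsupp.single (C1 m) 1 + Finsupp.single (C2 m) 1 :=
        decomp hCne hC1 hC2
      set wA := w' + Finsupp.single (A1 m) 1 + Finsupp.single (A2 m) 1 with hwA
      set wB := w' + Finsupp.single (B1 m) 1 + Finsupp.single (B2 m) 1 with hwB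
      -- degree facts
      have hdegw : w.degree = w'.degree + 2 := by
        rw [hwdec, degree_add, degree_add, degree_single, degree_single]
      have hdegA : wA.degree = n := by
        rw [hwA, degree_add, degree_add, degree_single, degree_single, ← hdeg, hdegw]
      have hdegB : wB.degree = n := by
        rw [hwB, degree_add, degree_add, degree_single, degree_single, ← hdeg, hdegw]
      -- measure facts
      have hMw : M w = M w' + (mes (C1 m) + mes (C2 m)) := by
        rw [hwdec, M_add, M_add, M_single, M_single]; ring
      have hMA : M wA < N := by
        rw [hwA, M_add, M_add, M_single, M_single]; omega
      have hMB : M wB < N := by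
        rw [hwB, M_add, M_add, M_single, M_single]; omega
      -- the key ring identity
      have key : (monomial w 1 : MvPolynomial PlueckerIdx k)
          = pfaffian k m * monomial w' 1 + monomial wB 1 - monomial wA 1 := by
        rw [hwdec, hwA, hwB, mon_two, mon_two, mon_two, pfaffian_eq]
        ring
      have hpf : pfaffian k m * monomial w' 1 ∈ plueckerIdeal k :=
        Ideal.mul_mem_right _ _ (Ideal.subset_span ⟨m, rfl⟩)
      have himg : (Ideal.Quotient.mkₐ k (plueckerIdeal k)) (monomial w 1)
          = (Ideal.Quotient.mkₐ k (plueckerIdeal k)) (monomial wB 1)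
            - (Ideal.Quotient.mkₐ k (plueckerIdeal k)) (monomial wA 1) := by
        rw [key, map_sub, map_add]
        have : (Ideal.Quotient.mkₐ k (plueckerIdeal k)) (pfaffian k m * monomial w' 1) = 0 := by
          rw [Ideal.Quotient.mkₐ_eq_mk]
          exact (Ideal.Quotient.eq_zero_iff_mem).mpr hpf
        rw [this, zero_add]
      rw [himg]
      exact Submodule.sub_mem _ (ih wB hMB hdegB) (ih wA hMA hdegA)

lemma straighten {n : ℕ} (w : PlueckerIdx →₀ ℕ) (hdeg : w.degree = n) :
    (Ideal.Quotient.mkₐ k (plueckerIdeal k)) (monomial w 1) ∈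
      Submodule.span k
        ((fun u => (Ideal.Quotient.mkₐ k (plueckerIdeal k)) (monomial u 1)) ''
          {u | Std u ∧ u.degree = n}) :=
  straighten_aux n (M w + 1) w (Nat.lt_succ_self _) hdeg

end Pl
namespace Pl
open Finsupp

variable {k}

lemma span_eq (n : ℕ) :
    (MvPolynomial.homogeneousSubmodule PlueckerIdx k n).map
      (Ideal.Quotient.mkₐ k (plueckerIdeal k)).toLinearMap =
    Submodule.span k
      ((fun u => (Ideal.Quotient.mkₐ k (plueckerIdeal k)) (monomial u 1)) ''
        {u | Std u ∧ u.degree = n}) := by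
  apply le_antisymm
  · rintro _ ⟨p, hp, rfl⟩
    rw [SetLike.mem_coe, MvPolynomial.mem_homogeneousSubmodule] at hp
    have hrep : p = ∑ d ∈ p.support, MvPolynomial.monomial d (MvPolynomial.coeff d p) :=
      p.as_sum
    simp only [AlgHom.toLinearMap_apply]
    rw [hrep, map_sum]
    apply Submodule.sum_mem
    intro d hd
    have hdeg : d.degree = n := by
      have := hp (MvPolynomial.mem_support_iff.mp hd)
      rwa [Pi.one_def, ← Finsupp.degree_eq_weight_one] at this
    have : (MvPolynomial.monomial d) (MvPolynomial.coeff d p)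
        = MvPolynomial.coeff d p • MvPolynomial.monomial d 1 := by
      rw [MvPolynomial.smul_monomial, smul_eq_mul, mul_one]
    rw [this, map_smul]
    exact Submodule.smul_mem _ _ (straighten d hdeg)
  · rw [Submodule.span_le]
    rintro _ ⟨u, ⟨_, hdeg⟩, rfl⟩
    exact ⟨monomial u 1,
      (MvPolynomial.mem_homogeneousSubmodule _ _).mpr
        (MvPolynomial.isHomogeneous_monomial 1 hdeg), rfl⟩

end Pl
namespace Pl
open Finsupp

/-- generic point: image of the Plücker variables as 2×2 minors -/
noncomputable def yrep (p : PlueckerIdx) : MvPolynomial (Fin 2 × Fin 5) k :=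
  X (0, p.1.1) * X (1, p.1.2) - X (0, p.1.2) * X (1, p.1.1)

noncomputable def phi : MvPolynomial PlueckerIdx k →ₐ[k] MvPolynomial (Fin 2 × Fin 5) k :=
  aeval (yrep k)

variable {k}

lemma phi_pfaffian (m : Fin 5) : phi k (pfaffian k m) = 0 := by
  rw [pfaffian_eq]
  fin_cases m <;>
    · simp only [phi, map_add, map_sub, map_mul, aeval_X, yrep, A1, A2, B1, B2, C1, C2, el]
      ring

lemma phi_ideal : plueckerIdeal k ≤ RingHom.ker (phi k) := by
  rw [plueckerIdeal, Ideal.span_le]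
  rintro _ ⟨m, rfl⟩
  exact phi_pfaffian m

noncomputable def psi : (MvPolynomial PlueckerIdx k ⧸ plueckerIdeal k) →ₐ[k]
    MvPolynomial (Fin 2 × Fin 5) k :=
  Ideal.Quotient.liftₐ (plueckerIdeal k) (phi k) (fun a ha => phi_ideal ha)

lemma psi_mk (x : MvPolynomial PlueckerIdx k) :
    psi (Ideal.Quotient.mkₐ k (plueckerIdeal k) x) = phi k x := by
  simp [psi]
  rfl

/-- weight of a `(Fin 2 × Fin 5)` exponent: sum of the first-row column indices -/
def wtA (μ : (Fin 2 × Fin 5) →₀ ℕ) : ℕ := ∑ i : Fin 5, μ (0, i) * i.val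

/-- weight of a Plücker exponent -/
def wt (w : PlueckerIdx →₀ ℕ) : ℕ := w.sum fun p m => m * p.1.1.val

/-- the leading exponent of `phi` of a monomial -/
noncomputable def Mexp (w : PlueckerIdx →₀ ℕ) : (Fin 2 × Fin 5) →₀ ℕ :=
  w.sum fun p m => Finsupp.single (0, p.1.1) m + Finsupp.single (1, p.1.2) m

lemma wt_add (a b : PlueckerIdx →₀ ℕ) : wt (a + b) = wt a + wt b :=
  Finsupp.sum_add_index' (fun p => by simp) (fun p m1 m2 => add_mul m1 m2 _)

lemma wt_single (p : PlueckerIdx) (m : ℕ) : wt (Finsupp.single p m) = m * p.1.1.val := by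
  unfold wt; rw [Finsupp.sum_single_index]; simp

lemma Mexp_add (a b : PlueckerIdx →₀ ℕ) : Mexp (a + b) = Mexp a + Mexp b :=
  Finsupp.sum_add_index' (fun p => by simp) (fun p m1 m2 => by
    simp [Finsupp.single_add]; abel)

lemma Mexp_single (p : PlueckerIdx) (m : ℕ) :
    Mexp (Finsupp.single p m)
      = Finsupp.single (0, p.1.1) m + Finsupp.single (1, p.1.2) m := by
  unfold Mexp; rw [Finsupp.sum_single_index]; simp

lemma Mexp_zero : Mexp 0 = 0 := by simp [Mexp]

lemma wtA_add (a b : (Fin 2 × Fin 5) →₀ ℕ) : wtA (a + b) = wtA a + wtA b := by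
  unfold wtA
  simp [add_mul, Finset.sum_add_distrib]

lemma wtA_single0 (a : Fin 5) (m : ℕ) : wtA (Finsupp.single (0, a) m) = m * a.val := by
  unfold wtA
  rw [Finset.sum_eq_single a]
  · simp
  · intro b _ hb
    rw [Finsupp.single_apply, if_neg (by simp [Prod.ext_iff, hb.symm]), zero_mul]
  · simp

lemma wtA_single1 (b : Fin 5) (m : ℕ) : wtA (Finsupp.single (1, b) m) = 0 := by
  unfold wtA
  apply Finset.sum_eq_zero
  intro i _
  rw [Finsupp.single_apply, if_neg (by simp [Prod.ext_iff]), zero_mul]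

lemma wtA_Mexp (w : PlueckerIdx →₀ ℕ) : wtA (Mexp w) = wt w := by
  induction w using Finsupp.induction with
  | zero => simp [Mexp_zero, wt, wtA]
  | single_add p m f _ _ ih =>
    rw [Mexp_add, wtA_add, wt_add, ih, Mexp_single, wtA_add, wtA_single0, wtA_single1,
      wt_single]
    omega

end Pl
namespace Pl
open Finsupp

variable {k}

lemma sub_single_apply_ne (μ : (Fin 2 × Fin 5) →₀ ℕ) (v v' : Fin 2 × Fin 5) (h : v ≠ v') :
    ((μ - Finsupp.single v 1) : (Fin 2 × Fin 5) →₀ ℕ) v' = μ v' := by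
  rw [Finsupp.tsub_apply, Finsupp.single_apply, if_neg h, tsub_zero]

lemma wtA_sub0 {μ : (Fin 2 × Fin 5) →₀ ℕ} {a : Fin 5} (h : μ (0, a) ≠ 0) :
    wtA (μ - Finsupp.single (0, a) 1) + a.val = wtA μ := by
  have hle : Finsupp.single ((0 : Fin 2), a) 1 ≤ μ :=
    Finsupp.single_le_iff.mpr (Nat.pos_of_ne_zero h)
  conv_rhs => rw [← tsub_add_cancel_of_le hle]
  rw [wtA_add, wtA_single0, one_mul]

lemma wtA_sub1 {μ : (Fin 2 × Fin 5) →₀ ℕ} {b : Fin 5} (h : μ (1, b) ≠ 0) :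
    wtA (μ - Finsupp.single (1, b) 1) = wtA μ := by
  have hle : Finsupp.single ((1 : Fin 2), b) 1 ≤ μ :=
    Finsupp.single_le_iff.mpr (Nat.pos_of_ne_zero h)
  conv_rhs => rw [← tsub_add_cancel_of_le hle]
  rw [wtA_add, wtA_single1, add_zero]

lemma key (N : ℕ) : ∀ (w : PlueckerIdx →₀ ℕ), w.degree = N → ∀ μ : (Fin 2 × Fin 5) →₀ ℕ,
    wtA μ ≤ wt w →
    MvPolynomial.coeff μ (phi k (monomial w 1)) = if μ = Mexp w then 1 else 0 := by
  induction N with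
  | zero =>
    intro w hdeg μ _
    have hw : w = 0 := (Finsupp.degree_eq_zero_iff w).mp hdeg
    subst hw
    rw [Mexp_zero]
    simp [MvPolynomial.coeff_one, eq_comm]
  | succ N ih =>
    intro w hdeg μ hwt
    have hw0 : w ≠ 0 := by
      intro h; rw [h, map_zero] at hdeg; exact Nat.succ_ne_zero N hdeg.symm
    obtain ⟨p, hp⟩ := Finsupp.support_nonempty_iff.mpr hw0
    have hple : Finsupp.single p 1 ≤ w :=
      Finsupp.single_le_iff.mpr (Nat.pos_of_ne_zero (Finsupp.mem_support_iff.mp hp))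
    set w' := w - Finsupp.single p 1 with hw'
    have hdecomp : w' + Finsupp.single p 1 = w := tsub_add_cancel_of_le hple
    have hdeg' : w'.degree = N := by
      have h2 := degree_add w' (Finsupp.single p 1)
      rw [hdecomp, degree_single, hdeg] at h2
      omega
    set i := p.1.1 with hi
    set j := p.1.2 with hj
    have hij : i < j := p.2
    have hwt2 : wt w = wt w' + i.val := by
      rw [← hdecomp, wt_add, wt_single, one_mul]
    have hMexp : Mexp w
        = Mexp w' + Finsupp.single ((0:Fin 2), i) 1 + Finsupp.single ((1:Fin 2), j) 1 := by
      rw [← hdecomp, Mexp_add, Mexp_single, add_assoc]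
    have hXp : phi k (X p : MvPolynomial PlueckerIdx k) = yrep k p := by simp [phi]
    have hsplit : phi k (monomial w 1)
        = phi k (monomial w' 1) * X (0, i) * X (1, j)
          - phi k (monomial w' 1) * X (0, j) * X (1, i) := by
      rw [← hdecomp, MvPolynomial.monomial_add_single, pow_one, map_mul, hXp]
      unfold yrep
      ring
    rw [hsplit, MvPolynomial.coeff_sub]
    simp only [MvPolynomial.coeff_mul_X']
    -- second term is zero
    have hT2 : (if (1, i) ∈ μ.support then
        (if (0, j) ∈ (μ - Finsupp.single (1, i) 1).support then
          MvPolynomial.coeff (μ - Finsupp.single (1, i) 1 - Finsupp.single (0, j) 1)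
            (phi k (monomial w' 1)) else 0) else 0) = 0 := by
      by_cases c3 : ((1:Fin 2), i) ∈ μ.support
      · rw [if_pos c3]
        by_cases c4 : ((0:Fin 2), j) ∈ (μ - Finsupp.single (1, i) 1).support
        · rw [if_pos c4]
          have hν₂ : wtA (μ - Finsupp.single (1, i) 1 - Finsupp.single (0, j) 1) + j.val
              = wtA μ := by
            rw [wtA_sub0 (Finsupp.mem_support_iff.mp c4),
              wtA_sub1 (Finsupp.mem_support_iff.mp c3)]
          have hlt : wtA (μ - Finsupp.single (1, i) 1 - Finsupp.single (0, j) 1) < wt w' := by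
            have : i.val < j.val := hij
            omega
          rw [ih w' hdeg' _ (le_of_lt hlt)]
          rw [if_neg]
          intro hEq
          rw [hEq, wtA_Mexp] at hlt
          exact lt_irrefl _ hlt
        · rw [if_neg c4]
      · rw [if_neg c3]
    rw [hT2, sub_zero]
    by_cases c1 : ((1:Fin 2), j) ∈ μ.support
    · rw [if_pos c1]
      by_cases c2 : ((0:Fin 2), i) ∈ (μ - Finsupp.single (1, j) 1).support
      · rw [if_pos c2]
        set ν₁ := μ - Finsupp.single (1, j) 1 - Finsupp.single (0, i) 1 with hν₁def
        have hν₁ : wtA ν₁ + i.val = wtA μ := by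
          rw [hν₁def, wtA_sub0 (Finsupp.mem_support_iff.mp c2),
            wtA_sub1 (Finsupp.mem_support_iff.mp c1)]
        have hle' : wtA ν₁ ≤ wt w' := by omega
        rw [ih w' hdeg' _ hle']
        -- now show the two indicators agree
        have e2 : μ - Finsupp.single (1, j) 1 + Finsupp.single (1, j) 1 = μ :=
          tsub_add_cancel_of_le (Finsupp.single_le_iff.mpr
            (Nat.pos_of_ne_zero (Finsupp.mem_support_iff.mp c1)))
        have e1 : ν₁ + Finsupp.single (0, i) 1 = μ - Finsupp.single (1, j) 1 :=
          tsub_add_cancel_of_le (Finsupp.single_le_iff.mpr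
            (Nat.pos_of_ne_zero (Finsupp.mem_support_iff.mp c2)))
        have hμdec : ν₁ + Finsupp.single (0, i) 1 + Finsupp.single (1, j) 1 = μ := by
          rw [e1, e2]
        by_cases hEq : ν₁ = Mexp w'
        · rw [if_pos hEq, if_pos]
          rw [hMexp, ← hEq, hμdec]
        · rw [if_neg hEq, if_neg]
          intro hμ
          apply hEq
          have : ν₁ + Finsupp.single (0, i) 1 + Finsupp.single (1, j) 1
              = Mexp w' + Finsupp.single (0, i) 1 + Finsupp.single (1, j) 1 := by
            rw [hμdec, ← hMexp, hμ]
          exact add_right_cancel (add_right_cancel this)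
      · rw [if_neg c2, if_neg]
        intro hμ
        apply c2
        rw [Finsupp.mem_support_iff, sub_single_apply_ne μ (1, j) (0, i) (by simp [Prod.ext_iff]), hμ, hMexp]
        simp [Finsupp.add_apply, Finsupp.single_apply]
    · rw [if_neg c1, if_neg]
      intro hμ
      apply c1
      rw [Finsupp.mem_support_iff, hμ, hMexp]
      simp [Finsupp.add_apply, Finsupp.single_apply]

end Pl
namespace Pl
open Finsupp

variable {k}

def fidx (p : PlueckerIdx) : ℕ := p.1.1.val * 5 + p.1.2.val

lemma cmp_le : ∀ {p q : PlueckerIdx}, (p ≤ q ∨ q ≤ p) → fidx p ≤ fidx q → p ≤ q := by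
  decide

lemma exists_max {w : PlueckerIdx →₀ ℕ} (hstd : Std w) (hw : w ≠ 0) :
    ∃ p ∈ w.support, ∀ q ∈ w.support, q ≤ p := by
  obtain ⟨p, hp, hmax⟩ :=
    Finset.exists_max_image w.support fidx (Finsupp.support_nonempty_iff.mpr hw)
  exact ⟨p, hp, fun q hq => cmp_le (hstd q hq p hp) (hmax q hq)⟩

lemma Std_mono {u v : PlueckerIdx →₀ ℕ} (h : u.support ⊆ v.support) (hv : Std v) : Std u :=
  fun p hp q hq => hv p (h hp) q (h hq)

lemma Mexp_apply0 (w : PlueckerIdx →₀ ℕ) (i : Fin 5) :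
    (Mexp w) (0, i) ≠ 0 ↔ ∃ p ∈ w.support, p.1.1 = i := by
  rw [Mexp, Finsupp.sum_apply]
  rw [Finsupp.sum]
  simp only [Finsupp.add_apply, Finsupp.single_apply, Prod.mk.injEq]
  rw [Ne, Finset.sum_eq_zero_iff]
  push_neg
  constructor
  · rintro ⟨p, hp, hne⟩
    refine ⟨p, hp, ?_⟩
    by_contra hne2
    simp [hne2, Fin.ext_iff] at hne
  · rintro ⟨p, hp, hpe⟩
    refine ⟨p, hp, ?_⟩
    simp [hpe, Finsupp.mem_support_iff.mp hp]

lemma Mexp_apply1 (w : PlueckerIdx →₀ ℕ) (j : Fin 5) :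
    (Mexp w) (1, j) ≠ 0 ↔ ∃ p ∈ w.support, p.1.2 = j := by
  rw [Mexp, Finsupp.sum_apply]
  rw [Finsupp.sum]
  simp only [Finsupp.add_apply, Finsupp.single_apply, Prod.mk.injEq]
  rw [Ne, Finset.sum_eq_zero_iff]
  push_neg
  constructor
  · rintro ⟨p, hp, hne⟩
    refine ⟨p, hp, ?_⟩
    by_contra hne2
    simp [hne2, Fin.ext_iff] at hne
  · rintro ⟨p, hp, hpe⟩
    refine ⟨p, hp, ?_⟩
    simp [hpe, Finsupp.mem_support_iff.mp hp]

lemma le_parts {p q : PlueckerIdx} (h : p ≤ q) : p.1.1 ≤ q.1.1 ∧ p.1.2 ≤ q.1.2 := h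

lemma Mexp_inj (N : ℕ) : ∀ (w w' : PlueckerIdx →₀ ℕ), w.degree = N → Std w → Std w' →
    Mexp w = Mexp w' → w = w' := by
  induction N with
  | zero =>
    intro w w' hdeg _ _ hM
    have hw : w = 0 := (Finsupp.degree_eq_zero_iff w).mp hdeg
    subst hw
    by_contra hne
    obtain ⟨p, hp⟩ := Finsupp.support_nonempty_iff.mpr (Ne.symm hne)
    have h2 : (Mexp w') (0, p.1.1) ≠ 0 := (Mexp_apply0 w' p.1.1).mpr ⟨p, hp, rfl⟩
    rw [← hM, Mexp_zero] at h2
    simp at h2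
  | succ N ih =>
    intro w w' hdeg hstd hstd' hM
    have hw0 : w ≠ 0 := by
      intro h; rw [h, map_zero] at hdeg; exact Nat.succ_ne_zero N hdeg.symm
    have hw'0 : w' ≠ 0 := by
      intro h
      obtain ⟨p, hp⟩ := Finsupp.support_nonempty_iff.mpr hw0
      have h2 : (Mexp w) (0, p.1.1) ≠ 0 := (Mexp_apply0 w p.1.1).mpr ⟨p, hp, rfl⟩
      rw [hM, h, Mexp_zero] at h2
      simp at h2
    obtain ⟨q, hq, hqmax⟩ := exists_max hstd hw0
    obtain ⟨q', hq', hqmax'⟩ := exists_max hstd' hw'0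
    -- q = q'
    have hqq' : q = q' := by
      have h11 : q.1.1 ≤ q'.1.1 := by
        have : (Mexp w') (0, q.1.1) ≠ 0 := by
          rw [← hM]; exact (Mexp_apply0 w q.1.1).mpr ⟨q, hq, rfl⟩
        obtain ⟨p', hp', hpe⟩ := (Mexp_apply0 w' q.1.1).mp this
        exact hpe ▸ (le_parts (hqmax' p' hp')).1
      have h11' : q'.1.1 ≤ q.1.1 := by
        have : (Mexp w) (0, q'.1.1) ≠ 0 := by
          rw [hM]; exact (Mexp_apply0 w' q'.1.1).mpr ⟨q', hq', rfl⟩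
        obtain ⟨p, hp, hpe⟩ := (Mexp_apply0 w q'.1.1).mp this
        exact hpe ▸ (le_parts (hqmax p hp)).1
      have h22 : q.1.2 ≤ q'.1.2 := by
        have : (Mexp w') (1, q.1.2) ≠ 0 := by
          rw [← hM]; exact (Mexp_apply1 w q.1.2).mpr ⟨q, hq, rfl⟩
        obtain ⟨p', hp', hpe⟩ := (Mexp_apply1 w' q.1.2).mp this
        exact hpe ▸ (le_parts (hqmax' p' hp')).2
      have h22' : q'.1.2 ≤ q.1.2 := by
        have : (Mexp w) (1, q'.1.2) ≠ 0 := by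
          rw [hM]; exact (Mexp_apply1 w' q'.1.2).mpr ⟨q', hq', rfl⟩
        obtain ⟨p, hp, hpe⟩ := (Mexp_apply1 w q'.1.2).mp this
        exact hpe ▸ (le_parts (hqmax p hp)).2
      apply Subtype.ext
      exact Prod.ext (le_antisymm h11 h11') (le_antisymm h22 h22')
    subst hqq'
    -- strip q
    have hle1 : Finsupp.single q 1 ≤ w :=
      Finsupp.single_le_iff.mpr (Nat.pos_of_ne_zero (Finsupp.mem_support_iff.mp hq))
    have hle2 : Finsupp.single q 1 ≤ w' :=
      Finsupp.single_le_iff.mpr (Nat.pos_of_ne_zero (Finsupp.mem_support_iff.mp hq'))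
    have e1 : (w - Finsupp.single q 1) + Finsupp.single q 1 = w := tsub_add_cancel_of_le hle1
    have e2 : (w' - Finsupp.single q 1) + Finsupp.single q 1 = w' := tsub_add_cancel_of_le hle2
    have hdeg1 : (w - Finsupp.single q 1).degree = N := by
      have h2 := degree_add (w - Finsupp.single q 1) (Finsupp.single q 1)
      rw [e1, degree_single, hdeg] at h2
      omega
    have hstd1 : Std (w - Finsupp.single q 1) := Std_mono Finsupp.support_tsub hstd
    have hstd2 : Std (w' - Finsupp.single q 1) := Std_mono Finsupp.support_tsub hstd'
    have hMs : Mexp (w - Finsupp.single q 1) = Mexp (w' - Finsupp.single q 1) := by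
      have h3 : Mexp ((w - Finsupp.single q 1) + Finsupp.single q 1)
          = Mexp ((w' - Finsupp.single q 1) + Finsupp.single q 1) := by rw [e1, e2, hM]
      rw [Mexp_add, Mexp_add] at h3
      exact add_right_cancel h3
    have := ih _ _ hdeg1 hstd1 hstd2 hMs
    rw [← e1, ← e2, this]

end Pl
namespace Pl
open Finsupp

variable {k}

lemma indep_phi : LinearIndependent k (fun u : {u : PlueckerIdx →₀ ℕ // Std u} =>
    phi k (monomial u.1 1)) := by
  rw [linearIndependent_iff']
  intro s g hsum u0 hu0
  by_contra hg
  classical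
  set s' := s.filter (fun u => g u ≠ 0) with hs'
  have hs'ne : s'.Nonempty := ⟨u0, Finset.mem_filter.mpr ⟨hu0, hg⟩⟩
  obtain ⟨v0, hv0s, hv0min⟩ := Finset.exists_min_image s' (fun u => wt u.1) hs'ne
  have hv0s' := Finset.mem_filter.mp hv0s
  have happ := congrArg (MvPolynomial.coeff (Mexp v0.1)) hsum
  rw [MvPolynomial.coeff_sum] at happ
  simp only [MvPolynomial.coeff_smul, MvPolynomial.coeff_zero] at happ
  have hterm : ∀ u ∈ s, g u • MvPolynomial.coeff (Mexp v0.1) (phi k (monomial u.1 1))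
      = if u = v0 then g v0 else 0 := by
    intro u hu
    by_cases hgu : g u = 0
    · rw [hgu, zero_smul, if_neg]
      intro h; rw [h] at hgu; exact hv0s'.2 hgu
    · have hus' : u ∈ s' := Finset.mem_filter.mpr ⟨hu, hgu⟩
      have hwtle : wt v0.1 ≤ wt u.1 := hv0min u hus'
      have hA : wtA (Mexp v0.1) ≤ wt u.1 := by rw [wtA_Mexp]; exact hwtle
      rw [key u.1.degree u.1 rfl _ hA]
      by_cases heq : Mexp v0.1 = Mexp u.1
      · have : u.1 = v0.1 := Mexp_inj u.1.degree u.1 v0.1 rfl u.2 v0.2 heq.symm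
        have huv : u = v0 := Subtype.ext this
        rw [if_pos heq, if_pos huv, huv, smul_eq_mul, mul_one]
      · have huv : u ≠ v0 := by
          intro h; rw [h] at heq; exact heq rfl
        rw [if_neg heq, if_neg huv, smul_zero]
  rw [Finset.sum_congr rfl hterm, Finset.sum_ite_eq' s v0 (fun _ => g v0)] at happ
  rw [if_pos hv0s'.1] at happ
  exact hv0s'.2 happ

lemma indep_mk : LinearIndependent k (fun u : {u : PlueckerIdx →₀ ℕ // Std u} =>
    (Ideal.Quotient.mkₐ k (plueckerIdeal k)) (monomial u.1 1)) := by
  apply LinearIndependent.of_comp (psi (k := k)).toLinearMap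
  have he : (⇑(psi (k := k)).toLinearMap ∘ fun u : {u : PlueckerIdx →₀ ℕ // Std u} =>
      (Ideal.Quotient.mkₐ k (plueckerIdeal k)) (monomial u.1 1))
      = fun u : {u : PlueckerIdx →₀ ℕ // Std u} => phi k (monomial u.1 1) := by
    funext u
    simp only [Function.comp_apply, AlgHom.toLinearMap_apply]
    exact psi_mk _
  rw [he]
  exact indep_phi

/-- the standard exponents of degree `n` -/
def StdN (n : ℕ) : Set (PlueckerIdx →₀ ℕ) := {u | Std u ∧ u.degree = n}

lemma StdN_finite (n : ℕ) : (StdN n).Finite := by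
  apply Set.Finite.subset (Finsupp.finite_of_degree_le n)
  intro u hu
  exact le_of_eq hu.2

set_option maxHeartbeats 1000000 in
lemma plueckerDim_eq (n : ℕ) : plueckerDim k n = (StdN n).ncard := by
  classical
  rw [plueckerDim, span_eq]
  set f : (PlueckerIdx →₀ ℕ) → (MvPolynomial PlueckerIdx k ⧸ plueckerIdeal k) :=
    fun u => (Ideal.Quotient.mkₐ k (plueckerIdeal k)) (monomial u 1) with hf
  have hVfin : (f '' {u | Std u ∧ u.degree = n}).Finite := (StdN_finite n).image f
  haveI : Fintype (f '' {u | Std u ∧ u.degree = n}) := hVfin.fintype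
  have hinj : Function.Injective (fun u : {u : PlueckerIdx →₀ ℕ // Std u} => f u.1) :=
    indep_mk.injective
  have hsub : LinearIndependent k
      (fun x : (f '' {u | Std u ∧ u.degree = n}) => (x : MvPolynomial PlueckerIdx k ⧸ plueckerIdeal k)) := by
    have himg : f '' {u | Std u ∧ u.degree = n}
        = Set.range (fun u : {u : {u : PlueckerIdx →₀ ℕ // Std u} // u.1.degree = n} =>
            f u.1.1) := by
      ext x
      constructor
      · rintro ⟨u, ⟨hu1, hu2⟩, rfl⟩
        exact ⟨⟨⟨u, hu1⟩, hu2⟩, rfl⟩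
      · rintro ⟨u, rfl⟩
        exact ⟨u.1.1, ⟨u.1.2, u.2⟩, rfl⟩
    rw [himg]
    apply (linearIndepOn_id_range_iff (indep_mk.comp Subtype.val Subtype.coe_injective).injective).mpr
    exact indep_mk.comp Subtype.val Subtype.coe_injective
  rw [finrank_span_set_eq_card hsub]
  rw [← Set.ncard_eq_toFinset_card']
  rw [Set.ncard_image_of_injOn]
  · rfl
  · intro a ha b hb hab
    have : (⟨a, ha.1⟩ : {u : PlueckerIdx →₀ ℕ // Std u}) = ⟨b, hb.1⟩ := hinj hab
    exact Subtype.ext_iff.mp this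

end Pl
namespace Pl
open Finsupp

variable {k}

/-- standard exponents of degree `n` with support inside `s` -/
def TS (s : Set PlueckerIdx) (n : ℕ) : Set (PlueckerIdx →₀ ℕ) :=
  {w | Std w ∧ w.degree = n ∧ ∀ q ∈ w.support, q ∈ s}

lemma TS_finite (s : Set PlueckerIdx) (n : ℕ) : (TS s n).Finite := by
  apply Set.Finite.subset (Finsupp.finite_of_degree_le n)
  intro u hu
  exact le_of_eq hu.2.1

lemma StdN_eq_TS (n : ℕ) : StdN n = TS Set.univ n := by
  ext w
  simp [StdN, TS]

noncomputable def maxEl (w : PlueckerIdx →₀ ℕ) : PlueckerIdx :=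
  if h : ∃ p, p ∈ w.support ∧ ∀ q ∈ w.support, q ≤ p then h.choose else el 0 1

lemma maxEl_spec {w : PlueckerIdx →₀ ℕ} (hstd : Std w) (hw : w ≠ 0) :
    maxEl w ∈ w.support ∧ ∀ q ∈ w.support, q ≤ maxEl w := by
  have hex : ∃ p, p ∈ w.support ∧ ∀ q ∈ w.support, q ≤ p := by
    obtain ⟨p, hp, hm⟩ := exists_max hstd hw
    exact ⟨p, hp, hm⟩
  rw [maxEl, dif_pos hex]
  exact hex.choose_spec

lemma maxEl_unique {w : PlueckerIdx →₀ ℕ} (hstd : Std w) {p : PlueckerIdx}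
    (hp : p ∈ w.support) (hmax : ∀ q ∈ w.support, q ≤ p) : maxEl w = p := by
  have hw : w ≠ 0 := by
    intro h
    rw [h] at hp
    simp at hp
  obtain ⟨h1, h2⟩ := maxEl_spec hstd hw
  exact le_antisymm (hmax _ h1) (h2 p hp)

lemma card_sigma' {ι : Type*} [Fintype ι] (f : ι → Type*) [∀ i, Finite (f i)] :
    Nat.card (Σ i, f i) = ∑ i, Nat.card (f i) := by
  letI : ∀ i, Fintype (f i) := fun i => Fintype.ofFinite _
  simp [Nat.card_eq_fintype_card, Fintype.card_sigma]

lemma TS_zero (s : Set PlueckerIdx) : Nat.card (TS s 0) = 1 := by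
  have : TS s 0 = {0} := by
    ext w
    simp only [TS, Set.mem_setOf_eq, Set.mem_singleton_iff]
    constructor
    · rintro ⟨_, hdeg, _⟩
      exact (Finsupp.degree_eq_zero_iff w).mp hdeg
    · rintro rfl
      refine ⟨fun p hp => by simp at hp, map_zero Finsupp.degree, fun q hq => by simp at hq⟩
  rw [this]
  simp [Nat.card_eq_fintype_card]

lemma TS_step (s : Set PlueckerIdx) [DecidablePred (· ∈ s)]
    (hdc : ∀ ⦃q p : PlueckerIdx⦄, q ≤ p → p ∈ s → q ∈ s) (n : ℕ) :
    Nat.card (TS s (n + 1))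
      = ∑ q ∈ Finset.univ.filter (· ∈ s), Nat.card (TS (Set.Iic q) n) := by
  haveI : Finite (TS s (n+1)) := (TS_finite s (n+1)).to_subtype
  haveI : ∀ q : PlueckerIdx, Finite (TS (Set.Iic q) n) :=
    fun q => (TS_finite (Set.Iic q) n).to_subtype
  -- the max-element fibration
  have hne : ∀ w : TS s (n+1), (w : PlueckerIdx →₀ ℕ) ≠ 0 := by
    rintro ⟨w, hstd, hdeg, hs⟩ h
    simp only at h
    rw [h, map_zero] at hdeg
    exact Nat.succ_ne_zero n hdeg.symm
  set F : TS s (n+1) → {q : PlueckerIdx // q ∈ s} := fun w =>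
    ⟨maxEl w.1, w.2.2.2 _ (maxEl_spec w.2.1 (hne w)).1⟩ with hF
  have e1 : Nat.card (TS s (n+1)) = Nat.card (Σ q : {q : PlueckerIdx // q ∈ s}, {w // F w = q}) :=
    Nat.card_congr (Equiv.sigmaFiberEquiv F).symm
  have e2 : ∀ q : {q : PlueckerIdx // q ∈ s},
      Nat.card {w // F w = q} = Nat.card (TS (Set.Iic q.1) n) := by
    intro q
    apply Nat.card_congr
    refine ⟨?_, ?_, ?_, ?_⟩
    · -- toFun
      rintro ⟨⟨w, hw⟩, hFw⟩
      refine ⟨w - Finsupp.single q.1 1, ?_, ?_, ?_⟩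
      · exact Std_mono Finsupp.support_tsub hw.1
      · have hmem : q.1 ∈ w.support := by
          have := (maxEl_spec hw.1 (hne ⟨w, hw⟩)).1
          rwa [show maxEl w = q.1 from congrArg Subtype.val hFw] at this
        have hle : Finsupp.single q.1 1 ≤ w :=
          Finsupp.single_le_iff.mpr (Nat.pos_of_ne_zero (Finsupp.mem_support_iff.mp hmem))
        have e : (w - Finsupp.single q.1 1) + Finsupp.single q.1 1 = w :=
          tsub_add_cancel_of_le hle
        have h2 := degree_add (w - Finsupp.single q.1 1) (Finsupp.single q.1 1)
        rw [e, degree_single, hw.2.1] at h2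
        omega
      · intro r hr
        have hr' : r ∈ w.support := Finsupp.support_tsub hr
        have := (maxEl_spec hw.1 (hne ⟨w, hw⟩)).2 r hr'
        rwa [show maxEl w = q.1 from congrArg Subtype.val hFw] at this
    · -- invFun
      rintro ⟨w', hw'⟩
      refine ⟨⟨w' + Finsupp.single q.1 1, ?_, ?_, ?_⟩, ?_⟩
      · -- Std
        intro p1 hp1 p2 hp2
        have hsub : (w' + Finsupp.single q.1 1).support ⊆ w'.support ∪ {q.1} := by
          intro r hr
          rcases Finset.mem_union.mp (Finsupp.support_add hr) with h | h
          · exact Finset.mem_union_left _ h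
          · exact Finset.mem_union_right _ (Finsupp.support_single_subset h)
        have h1 := hsub hp1
        have h2 := hsub hp2
        simp only [Finset.mem_union, Finset.mem_singleton] at h1 h2
        rcases h1 with h1 | h1 <;> rcases h2 with h2 | h2
        · exact hw'.1 p1 h1 p2 h2
        · subst h2; exact Or.inl (hw'.2.2 p1 h1)
        · subst h1; exact Or.inr (hw'.2.2 p2 h2)
        · subst h1; subst h2; exact Or.inl le_rfl
      · rw [degree_add, degree_single, hw'.2.1]
      · intro r hr
        rcases Finset.mem_union.mp (Finsupp.support_add hr) with h | h
        · exact hdc (hw'.2.2 r h) q.2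
        · have : r = q.1 := Finset.mem_singleton.mp (Finsupp.support_single_subset h)
          rw [this]; exact q.2
      · -- F w = q
        apply Subtype.ext
        show maxEl _ = q.1
        apply maxEl_unique
        · intro p1 hp1 p2 hp2
          have hsub : (w' + Finsupp.single q.1 1).support ⊆ w'.support ∪ {q.1} := by
            intro r hr
            rcases Finset.mem_union.mp (Finsupp.support_add hr) with h | h
            · exact Finset.mem_union_left _ h
            · exact Finset.mem_union_right _ (Finsupp.support_single_subset h)
          have h1 := hsub hp1
          have h2 := hsub hp2
          simp only [Finset.mem_union, Finset.mem_singleton] at h1 h2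
          rcases h1 with h1 | h1 <;> rcases h2 with h2 | h2
          · exact hw'.1 p1 h1 p2 h2
          · subst h2; exact Or.inl (hw'.2.2 p1 h1)
          · subst h1; exact Or.inr (hw'.2.2 p2 h2)
          · subst h1; subst h2; exact Or.inl le_rfl
        · rw [Finsupp.mem_support_iff, Finsupp.add_apply, Finsupp.single_apply, if_pos rfl]
          omega
        · intro r hr
          rcases Finset.mem_union.mp (Finsupp.support_add hr) with h | h
          · exact hw'.2.2 r h
          · have : r = q.1 := Finset.mem_singleton.mp (Finsupp.support_single_subset h)
            rw [this]
    · -- left inverse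
      rintro ⟨⟨w, hw⟩, hFw⟩
      apply Subtype.ext
      apply Subtype.ext
      show (w - Finsupp.single q.1 1) + Finsupp.single q.1 1 = w
      have hmem : q.1 ∈ w.support := by
        have := (maxEl_spec hw.1 (hne ⟨w, hw⟩)).1
        rwa [show maxEl w = q.1 from congrArg Subtype.val hFw] at this
      have hle : Finsupp.single q.1 1 ≤ w :=
        Finsupp.single_le_iff.mpr (Nat.pos_of_ne_zero (Finsupp.mem_support_iff.mp hmem))
      exact tsub_add_cancel_of_le hle
    · -- right inverse
      rintro ⟨w', hw'⟩
      apply Subtype.ext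
      show (w' + Finsupp.single q.1 1) - Finsupp.single q.1 1 = w'
      ext r
      simp only [Finsupp.tsub_apply, Finsupp.add_apply]
      omega
  rw [e1, card_sigma']
  rw [show (∑ q ∈ Finset.univ.filter (· ∈ s), Nat.card (TS (Set.Iic q) n))
      = ∑ q : {q : PlueckerIdx // q ∈ s}, Nat.card (TS (Set.Iic q.1) n) from
    Finset.sum_subtype _ (by simp) _]
  exact Finset.sum_congr rfl (fun q _ => e2 q)

end Pl
namespace Pl
open Finsupp

noncomputable def Useries (p : PlueckerIdx) : PowerSeries ℤ :=
  PowerSeries.mk fun n => (Nat.card (TS (Set.Iic p) n) : ℤ)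

noncomputable def Gseries : PowerSeries ℤ :=
  PowerSeries.mk fun n => (Nat.card (TS Set.univ n) : ℤ)

instance : DecidablePred (· ∈ (Set.univ : Set PlueckerIdx)) := fun _ => .isTrue trivial
instance (p : PlueckerIdx) : DecidablePred (· ∈ Set.Iic p) :=
  fun q => (inferInstance : Decidable (q ≤ p))

lemma Useries_eq (p : PlueckerIdx) :
    Useries p = 1 + PowerSeries.X *
      ∑ q ∈ Finset.univ.filter (· ∈ Set.Iic p), Useries q := by
  ext n
  cases n with
  | zero =>
    simp only [Useries, PowerSeries.coeff_mk, map_add, PowerSeries.coeff_one,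
      PowerSeries.coeff_zero_X_mul, if_pos rfl, add_zero, TS_zero]
    norm_num
  | succ n =>
    rw [Useries, PowerSeries.coeff_mk, map_add, PowerSeries.coeff_one,
      PowerSeries.coeff_succ_X_mul, if_neg (Nat.succ_ne_zero n), zero_add, map_sum]
    rw [TS_step (Set.Iic p) (fun q r hqr hr => le_trans hqr hr) n]
    push_cast
    apply Finset.sum_congr rfl
    intro q _
    rw [Useries, PowerSeries.coeff_mk]

lemma Gseries_eq :
    Gseries = 1 + PowerSeries.X *
      ∑ q ∈ Finset.univ.filter (· ∈ (Set.univ : Set PlueckerIdx)), Useries q := by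
  ext n
  cases n with
  | zero =>
    simp only [Gseries, PowerSeries.coeff_mk, map_add, PowerSeries.coeff_one,
      PowerSeries.coeff_zero_X_mul, if_pos rfl, add_zero, TS_zero]
    norm_num
  | succ n =>
    rw [Gseries, PowerSeries.coeff_mk, map_add, PowerSeries.coeff_one,
      PowerSeries.coeff_succ_X_mul, if_neg (Nat.succ_ne_zero n), zero_add, map_sum]
    rw [TS_step Set.univ (fun q r _ _ => trivial) n]
    push_cast
    apply Finset.sum_congr rfl
    intro q _
    rw [Useries, PowerSeries.coeff_mk]

lemma Gseries_identity : Gseries * (1 - PowerSeries.X) ^ 10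
    = 1 - 5 * PowerSeries.X ^ 2 + 5 * PowerSeries.X ^ 3 - PowerSeries.X ^ 5 := by
  have h01 := Useries_eq (el 0 1)
  rw [show Finset.univ.filter (· ∈ Set.Iic (el 0 1)) = ({el 0 1} : Finset PlueckerIdx) from by decide, Finset.sum_singleton] at h01
  have h02 := Useries_eq (el 0 2)
  rw [show Finset.univ.filter (· ∈ Set.Iic (el 0 2)) = ({el 0 1, el 0 2} : Finset PlueckerIdx) from by decide, Finset.sum_insert (by decide), Finset.sum_singleton] at h02
  have h03 := Useries_eq (el 0 3)
  rw [show Finset.univ.filter (· ∈ Set.Iic (el 0 3)) = ({el 0 1, el 0 2, el 0 3} : Finset PlueckerIdx) from by decide, Finset.sum_insert (by decide), Finset.sum_insert (by decide), Finset.sum_singleton] at h03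
  have h04 := Useries_eq (el 0 4)
  rw [show Finset.univ.filter (· ∈ Set.Iic (el 0 4)) = ({el 0 1, el 0 2, el 0 3, el 0 4} : Finset PlueckerIdx) from by decide, Finset.sum_insert (by decide), Finset.sum_insert (by decide), Finset.sum_insert (by decide), Finset.sum_singleton] at h04
  have h12 := Useries_eq (el 1 2)
  rw [show Finset.univ.filter (· ∈ Set.Iic (el 1 2)) = ({el 0 1, el 0 2, el 1 2} : Finset PlueckerIdx) from by decide, Finset.sum_insert (by decide), Finset.sum_insert (by decide), Finset.sum_singleton] at h12
  have h13 := Useries_eq (el 1 3)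
  rw [show Finset.univ.filter (· ∈ Set.Iic (el 1 3)) = ({el 0 1, el 0 2, el 0 3, el 1 2, el 1 3} : Finset PlueckerIdx) from by decide, Finset.sum_insert (by decide), Finset.sum_insert (by decide), Finset.sum_insert (by decide), Finset.sum_insert (by decide), Finset.sum_singleton] at h13
  have h14 := Useries_eq (el 1 4)
  rw [show Finset.univ.filter (· ∈ Set.Iic (el 1 4)) = ({el 0 1, el 0 2, el 0 3, el 0 4, el 1 2, el 1 3, el 1 4} : Finset PlueckerIdx) from by decide, Finset.sum_insert (by decide), Finset.sum_insert (by decide), Finset.sum_insert (by decide), Finset.sum_insert (by decide), Finset.sum_insert (by decide), Finset.sum_insert (by decide), Finset.sum_singleton] at h14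
  have h23 := Useries_eq (el 2 3)
  rw [show Finset.univ.filter (· ∈ Set.Iic (el 2 3)) = ({el 0 1, el 0 2, el 0 3, el 1 2, el 1 3, el 2 3} : Finset PlueckerIdx) from by decide, Finset.sum_insert (by decide), Finset.sum_insert (by decide), Finset.sum_insert (by decide), Finset.sum_insert (by decide), Finset.sum_insert (by decide), Finset.sum_singleton] at h23
  have h24 := Useries_eq (el 2 4)
  rw [show Finset.univ.filter (· ∈ Set.Iic (el 2 4)) = ({el 0 1, el 0 2, el 0 3, el 0 4, el 1 2, el 1 3, el 1 4, el 2 3, el 2 4} : Finset PlueckerIdx) from by decide, Finset.sum_insert (by decide), Finset.sum_insert (by decide), Finset.sum_insert (by decide), Finset.sum_insert (by decide), Finset.sum_insert (by decide), Finset.sum_insert (by decide), Finset.sum_insert (by decide), Finset.sum_insert (by decide), Finset.sum_singleton] at h24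
  have h34 := Useries_eq (el 3 4)
  rw [show Finset.univ.filter (· ∈ Set.Iic (el 3 4)) = ({el 0 1, el 0 2, el 0 3, el 0 4, el 1 2, el 1 3, el 1 4, el 2 3, el 2 4, el 3 4} : Finset PlueckerIdx) from by decide, Finset.sum_insert (by decide), Finset.sum_insert (by decide), Finset.sum_insert (by decide), Finset.sum_insert (by decide), Finset.sum_insert (by decide), Finset.sum_insert (by decide), Finset.sum_insert (by decide), Finset.sum_insert (by decide), Finset.sum_insert (by decide), Finset.sum_singleton] at h34
  have hG := Gseries_eq
  rw [show Finset.univ.filter (· ∈ (Set.univ : Set PlueckerIdx)) = ({el 0 1, el 0 2, el 0 3, el 0 4, el 1 2, el 1 3, el 1 4, el 2 3, el 2 4, el 3 4} : Finset PlueckerIdx) from by decide, Finset.sum_insert (by decide), Finset.sum_insert (by decide), Finset.sum_insert (by decide), Finset.sum_insert (by decide), Finset.sum_insert (by decide), Finset.sum_insert (by decide), Finset.sum_insert (by decide), Finset.sum_insert (by decide), Finset.sum_insert (by decide), Finset.sum_singleton] at hG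
  have E01 : (1 - PowerSeries.X)^1 * Useries (el 0 1) = (1 : PowerSeries ℤ) := by
    linear_combination ((1 - PowerSeries.X)^0 : PowerSeries ℤ) * h01
  have E02 : (1 - PowerSeries.X)^2 * Useries (el 0 2) = (1 : PowerSeries ℤ) := by
    linear_combination ((1 - PowerSeries.X)^1 : PowerSeries ℤ) * h02 + (PowerSeries.X * (1 - PowerSeries.X)^0 : PowerSeries ℤ) * E01
  have E03 : (1 - PowerSeries.X)^3 * Useries (el 0 3) = (1 : PowerSeries ℤ) := by
    linear_combination ((1 - PowerSeries.X)^2 : PowerSeries ℤ) * h03 + (PowerSeries.X * (1 - PowerSeries.X)^1 : PowerSeries ℤ) * E01 + (PowerSeries.X * (1 - PowerSeries.X)^0 : PowerSeries ℤ) * E02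
  have E12 : (1 - PowerSeries.X)^3 * Useries (el 1 2) = (1 : PowerSeries ℤ) := by
    linear_combination ((1 - PowerSeries.X)^2 : PowerSeries ℤ) * h12 + (PowerSeries.X * (1 - PowerSeries.X)^1 : PowerSeries ℤ) * E01 + (PowerSeries.X * (1 - PowerSeries.X)^0 : PowerSeries ℤ) * E02
  have E04 : (1 - PowerSeries.X)^4 * Useries (el 0 4) = (1 : PowerSeries ℤ) := by
    linear_combination ((1 - PowerSeries.X)^3 : PowerSeries ℤ) * h04 + (PowerSeries.X * (1 - PowerSeries.X)^2 : PowerSeries ℤ) * E01 + (PowerSeries.X * (1 - PowerSeries.X)^1 : PowerSeries ℤ) * E02 + (PowerSeries.X * (1 - PowerSeries.X)^0 : PowerSeries ℤ) * E03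
  have E13 : (1 - PowerSeries.X)^4 * Useries (el 1 3) = (1 + PowerSeries.X : PowerSeries ℤ) := by
    linear_combination ((1 - PowerSeries.X)^3 : PowerSeries ℤ) * h13 + (PowerSeries.X * (1 - PowerSeries.X)^2 : PowerSeries ℤ) * E01 + (PowerSeries.X * (1 - PowerSeries.X)^1 : PowerSeries ℤ) * E02 + (PowerSeries.X * (1 - PowerSeries.X)^0 : PowerSeries ℤ) * E03 + (PowerSeries.X * (1 - PowerSeries.X)^0 : PowerSeries ℤ) * E12
  have E14 : (1 - PowerSeries.X)^5 * Useries (el 1 4) = (1 + 2*PowerSeries.X : PowerSeries ℤ) := by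
    linear_combination ((1 - PowerSeries.X)^4 : PowerSeries ℤ) * h14 + (PowerSeries.X * (1 - PowerSeries.X)^3 : PowerSeries ℤ) * E01 + (PowerSeries.X * (1 - PowerSeries.X)^2 : PowerSeries ℤ) * E02 + (PowerSeries.X * (1 - PowerSeries.X)^1 : PowerSeries ℤ) * E03 + (PowerSeries.X * (1 - PowerSeries.X)^0 : PowerSeries ℤ) * E04 + (PowerSeries.X * (1 - PowerSeries.X)^1 : PowerSeries ℤ) * E12 + (PowerSeries.X * (1 - PowerSeries.X)^0 : PowerSeries ℤ) * E13
  have E23 : (1 - PowerSeries.X)^5 * Useries (el 2 3) = (1 + PowerSeries.X : PowerSeries ℤ) := by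
    linear_combination ((1 - PowerSeries.X)^4 : PowerSeries ℤ) * h23 + (PowerSeries.X * (1 - PowerSeries.X)^3 : PowerSeries ℤ) * E01 + (PowerSeries.X * (1 - PowerSeries.X)^2 : PowerSeries ℤ) * E02 + (PowerSeries.X * (1 - PowerSeries.X)^1 : PowerSeries ℤ) * E03 + (PowerSeries.X * (1 - PowerSeries.X)^1 : PowerSeries ℤ) * E12 + (PowerSeries.X * (1 - PowerSeries.X)^0 : PowerSeries ℤ) * E13
  have E24 : (1 - PowerSeries.X)^6 * Useries (el 2 4) = (1 + 3*PowerSeries.X + PowerSeries.X^2 : PowerSeries ℤ) := by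
    linear_combination ((1 - PowerSeries.X)^5 : PowerSeries ℤ) * h24 + (PowerSeries.X * (1 - PowerSeries.X)^4 : PowerSeries ℤ) * E01 + (PowerSeries.X * (1 - PowerSeries.X)^3 : PowerSeries ℤ) * E02 + (PowerSeries.X * (1 - PowerSeries.X)^2 : PowerSeries ℤ) * E03 + (PowerSeries.X * (1 - PowerSeries.X)^1 : PowerSeries ℤ) * E04 + (PowerSeries.X * (1 - PowerSeries.X)^2 : PowerSeries ℤ) * E12 + (PowerSeries.X * (1 - PowerSeries.X)^1 : PowerSeries ℤ) * E13 + (PowerSeries.X * (1 - PowerSeries.X)^0 : PowerSeries ℤ) * E14 + (PowerSeries.X * (1 - PowerSeries.X)^0 : PowerSeries ℤ) * E23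
  have E34 : (1 - PowerSeries.X)^7 * Useries (el 3 4) = (1 + 3*PowerSeries.X + PowerSeries.X^2 : PowerSeries ℤ) := by
    linear_combination ((1 - PowerSeries.X)^6 : PowerSeries ℤ) * h34 + (PowerSeries.X * (1 - PowerSeries.X)^5 : PowerSeries ℤ) * E01 + (PowerSeries.X * (1 - PowerSeries.X)^4 : PowerSeries ℤ) * E02 + (PowerSeries.X * (1 - PowerSeries.X)^3 : PowerSeries ℤ) * E03 + (PowerSeries.X * (1 - PowerSeries.X)^2 : PowerSeries ℤ) * E04 + (PowerSeries.X * (1 - PowerSeries.X)^3 : PowerSeries ℤ) * E12 + (PowerSeries.X * (1 - PowerSeries.X)^2 : PowerSeries ℤ) * E13 + (PowerSeries.X * (1 - PowerSeries.X)^1 : PowerSeries ℤ) * E14 + (PowerSeries.X * (1 - PowerSeries.X)^1 : PowerSeries ℤ) * E23 + (PowerSeries.X * (1 - PowerSeries.X)^0 : PowerSeries ℤ) * E24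
  linear_combination ((1 - PowerSeries.X)^10 : PowerSeries ℤ) * hG + (PowerSeries.X * (1 - PowerSeries.X)^9 : PowerSeries ℤ) * E01 + (PowerSeries.X * (1 - PowerSeries.X)^8 : PowerSeries ℤ) * E02 + (PowerSeries.X * (1 - PowerSeries.X)^7 : PowerSeries ℤ) * E03 + (PowerSeries.X * (1 - PowerSeries.X)^6 : PowerSeries ℤ) * E04 + (PowerSeries.X * (1 - PowerSeries.X)^7 : PowerSeries ℤ) * E12 + (PowerSeries.X * (1 - PowerSeries.X)^6 : PowerSeries ℤ) * E13 + (PowerSeries.X * (1 - PowerSeries.X)^5 : PowerSeries ℤ) * E14 + (PowerSeries.X * (1 - PowerSeries.X)^5 : PowerSeries ℤ) * E23 + (PowerSeries.X * (1 - PowerSeries.X)^4 : PowerSeries ℤ) * E24 + (PowerSeries.X * (1 - PowerSeries.X)^3 : PowerSeries ℤ) * E34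

end Pl

theorem stmt3 :
    (PowerSeries.mk fun n => (plueckerDim k n : ℤ)) * (1 - PowerSeries.X) ^ 10 =
      1 - 5 * PowerSeries.X ^ 2 + 5 * PowerSeries.X ^ 3 - PowerSeries.X ^ 5 := by
  have h : (PowerSeries.mk fun n => (plueckerDim k n : ℤ)) = Pl.Gseries := by
    ext n
    rw [PowerSeries.coeff_mk, Pl.Gseries, PowerSeries.coeff_mk]
    congr 1
    rw [Pl.plueckerDim_eq n, Pl.StdN_eq_TS n, ← Nat.card_coe_set_eq]
  rw [h]
  exact Pl.Gseries_identity
end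

section
/- Let k be a field of characteristic zero and let R = k[x_{ij} : 0 ≤ i < j ≤ 4] be the polynomial ring in 10 variables. For each m ∈ {0,1,2,3,4}, let a < b < c < d be the elements of {0,1,2,3,4} \ {m} and set q_m = x_{ab} x_{cd} − x_{ac} x_{bd} + x_{ad} x_{bc}. Then the ideal I = (q_0, …, q_4) of R is a prime ideal; equivalently, the quotient ring S = R/I is an integral domain. -/
set_option linter.unusedSectionVars false


open MvPolynomial

variable (k : Type*) [Field k] [CharZero k]

namespace PlueckerAux

/-- The Plücker parametrization map. -/
noncomputable def phi : MvPolynomial PlueckerIdx k →ₐ[k] MvPolynomial (Fin 2 × Fin 5) k :=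
  MvPolynomial.aeval fun p => X ((0:Fin 2), p.1.1) * X ((1:Fin 2), p.1.2)
    - X ((0:Fin 2), p.1.2) * X ((1:Fin 2), p.1.1)

lemma phi_pfaffian (m : Fin 5) : phi k (pfaffian k m) = 0 := by
  fin_cases m <;>
    simp only [pfaffian, xv, phi, map_add, map_sub, map_mul, aeval_X] <;> ring

/-- standard exponents: the support is a chain in the product order -/
def Std (α : PlueckerIdx →₀ ℕ) : Prop :=
  ∀ p ∈ α.support, ∀ q ∈ α.support, p.1 ≤ q.1 ∨ q.1 ≤ p.1

abbrev StdIdx := {α : PlueckerIdx →₀ ℕ // Std α}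

/-- weight of an ambient variable -/
def om (v : Fin 2 × Fin 5) : ℕ := (if v.1 = 0 then 2 else 1) * (4 - v.2.val)

/-- weight of an ambient exponent -/
def W (γ : Fin 2 × Fin 5 →₀ ℕ) : ℕ := γ.sum fun v n => n * om v

/-- leading exponent of the image of a monomial -/
noncomputable def L (α : PlueckerIdx →₀ ℕ) : Fin 2 × Fin 5 →₀ ℕ :=
  α.sum fun p n => Finsupp.single ((0:Fin 2), p.1.1) n + Finsupp.single ((1:Fin 2), p.1.2) n

/-- straightening weight of a Plücker variable -/
def w (p : PlueckerIdx) : ℕ := (p.1.2.val - p.1.1.val)^2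

/-- straightening weight of an exponent -/
def mu (α : PlueckerIdx →₀ ℕ) : ℕ := α.sum fun p n => n * w p

omit [CharZero k] in
lemma W_add (γ δ : Fin 2 × Fin 5 →₀ ℕ) : W (γ + δ) = W γ + W δ :=
  Finsupp.sum_add_index' (by simp) (by intros; ring)

lemma W_single (v : Fin 2 × Fin 5) (n : ℕ) : W (Finsupp.single v n) = n * om v := by
  rw [W, Finsupp.sum_single_index]; simp

lemma L_add (α β : PlueckerIdx →₀ ℕ) : L (α + β) = L α + L β :=
  Finsupp.sum_add_index' (by simp) (by intros; simp [Finsupp.single_add]; abel)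

lemma L_single (p : PlueckerIdx) (n : ℕ) :
    L (Finsupp.single p n) =
      Finsupp.single ((0:Fin 2), p.1.1) n + Finsupp.single ((1:Fin 2), p.1.2) n := by
  rw [L, Finsupp.sum_single_index]; simp

lemma mu_add (α β : PlueckerIdx →₀ ℕ) : mu (α + β) = mu α + mu β :=
  Finsupp.sum_add_index' (by simp) (by intros; ring)

lemma mu_single (p : PlueckerIdx) (n : ℕ) : mu (Finsupp.single p n) = n * w p := by
  rw [mu, Finsupp.sum_single_index]; simp

/-- the "dominance" predicate: f is a monic leading monomial plus lower-weight terms -/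
def Q (α : PlueckerIdx →₀ ℕ) (f : MvPolynomial (Fin 2 × Fin 5) k) : Prop :=
  ∃ r, f = monomial (L α) 1 + r ∧ ∀ γ ∈ r.support, W γ < W (L α)

lemma Q_one : Q k 0 1 := by
  refine ⟨0, ?_, by simp⟩
  have h0 : L (0 : PlueckerIdx →₀ ℕ) = 0 := Finsupp.sum_zero_index
  rw [h0]
  simp

lemma Q_mul {α β f g} (hf : Q k α f) (hg : Q k β g) : Q k (α + β) (f * g) := by
  classical
  obtain ⟨r, rfl, hr⟩ := hf
  obtain ⟨s, rfl, hs⟩ := hg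
  refine ⟨monomial (L α) 1 * s + r * monomial (L β) 1 + r * s, ?_, ?_⟩
  · rw [L_add]
    have hm : (monomial (L α) (1:k)) * monomial (L β) 1 = monomial (L α + L β) 1 := by
      rw [monomial_mul, one_mul]
    rw [← hm]; ring
  · intro γ hγ
    rw [L_add, W_add]
    have key : ∀ (x y : MvPolynomial (Fin 2 × Fin 5) k), γ ∈ (x * y).support →
        ∃ γ₁ ∈ x.support, ∃ γ₂ ∈ y.support, γ₁ + γ₂ = γ := by
      intro x y hxy
      exact Finset.mem_add.mp (MvPolynomial.support_mul x y hxy)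
    have hmono : ∀ (u : Fin 2 × Fin 5 →₀ ℕ) γ₁, γ₁ ∈ (monomial u (1:k)).support → γ₁ = u := by
      intro u γ₁ h1
      rw [support_monomial] at h1
      simpa using h1
    rcases Finset.mem_union.mp (Finset.mem_of_subset MvPolynomial.support_add hγ) with h12 | h3
    · rcases Finset.mem_union.mp (Finset.mem_of_subset MvPolynomial.support_add h12) with h1 | h2
      · obtain ⟨γ₁, hγ₁, γ₂, hγ₂, rfl⟩ := key _ _ h1
        have he := hmono _ _ hγ₁; subst he
        have := hs _ hγ₂
        rw [W_add]; omega
      · obtain ⟨γ₁, hγ₁, γ₂, hγ₂, rfl⟩ := key _ _ h2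
        have he := hmono _ _ hγ₂; subst he
        have := hr _ hγ₁
        rw [W_add]; omega
    · obtain ⟨γ₁, hγ₁, γ₂, hγ₂, rfl⟩ := key _ _ h3
      have h1 := hr _ hγ₁; have h2 := hs _ hγ₂
      rw [W_add]; omega

lemma Q_X (p : PlueckerIdx) : Q k (Finsupp.single p 1) (phi k (X p)) := by
  classical
  have hXX : ∀ u v : Fin 2 × Fin 5, (X u * X v : MvPolynomial (Fin 2 × Fin 5) k)
      = monomial (Finsupp.single u 1 + Finsupp.single v 1) 1 := by
    intro u v
    rw [← pow_one (X u : MvPolynomial (Fin 2 × Fin 5) k), ← pow_one (X v : MvPolynomial (Fin 2 × Fin 5) k),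
      X_pow_eq_monomial, X_pow_eq_monomial, monomial_mul, one_mul]
  refine ⟨- monomial (Finsupp.single ((0:Fin 2), p.1.2) 1 + Finsupp.single ((1:Fin 2), p.1.1) 1) 1, ?_, ?_⟩
  · simp only [phi, aeval_X, hXX, L_single]
    ring
  · intro γ hγ
    have hγ' : γ = Finsupp.single ((0:Fin 2), p.1.2) 1 + Finsupp.single ((1:Fin 2), p.1.1) 1 := by
      rw [MvPolynomial.support_neg, support_monomial] at hγ
      simpa using hγ
    subst hγ'
    rw [L_single, W_add, W_add, W_single, W_single, W_single, W_single]
    have hlt : p.1.1.val < p.1.2.val := p.2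
    have h1 : p.1.1.val < 5 := p.1.1.isLt
    have h2 : p.1.2.val < 5 := p.1.2.isLt
    simp only [om]
    norm_num
    omega

lemma Q_monomial (α : PlueckerIdx →₀ ℕ) : Q k α (phi k (monomial α 1)) := by
  induction α using Finsupp.induction with
  | zero =>
    have : (monomial (0 : PlueckerIdx →₀ ℕ) (1:k)) = 1 := by simp
    rw [this, map_one]
    exact Q_one k
  | single_add p n β hp hn ih =>
    have hpow : ∀ m : ℕ, Q k (Finsupp.single p m) ((phi k (X p)) ^ m) := by
      intro m; induction m with
      | zero => simpa using Q_one k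
      | succ m ihm =>
        have h := Q_mul k ihm (Q_X k p)
        rw [← Finsupp.single_add] at h
        simpa [pow_succ] using h
    have hmon : (monomial (Finsupp.single p n + β) (1:k)) = X p ^ n * monomial β 1 := by
      rw [X_pow_eq_monomial, monomial_mul, one_mul]
    rw [hmon, map_mul, map_pow]
    exact Q_mul k (hpow n) ih


lemma L_apply_fst (α : PlueckerIdx →₀ ℕ) (i : Fin 5) :
    L α ((0:Fin 2), i) = α.sum fun p n => if p.1.1 = i then n else 0 := by
  classical
  rw [L, Finsupp.sum_apply]
  apply Finsupp.sum_congr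
  intro p _
  rw [Finsupp.add_apply, Finsupp.single_apply, Finsupp.single_apply]
  have h2 : ¬ (((1:Fin 2), p.1.2) = ((0:Fin 2), i)) := by
    simp [Prod.ext_iff]
  rw [if_neg h2, add_zero]
  by_cases h : p.1.1 = i
  · rw [if_pos (by rw [h]), if_pos h]
  · rw [if_neg (by simp [Prod.ext_iff, h]), if_neg h]

lemma L_apply_snd (α : PlueckerIdx →₀ ℕ) (j : Fin 5) :
    L α ((1:Fin 2), j) = α.sum fun p n => if p.1.2 = j then n else 0 := by
  classical
  rw [L, Finsupp.sum_apply]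
  apply Finsupp.sum_congr
  intro p _
  rw [Finsupp.add_apply, Finsupp.single_apply, Finsupp.single_apply]
  have h2 : ¬ (((0:Fin 2), p.1.1) = ((1:Fin 2), j)) := by
    simp [Prod.ext_iff]
  rw [if_neg h2, zero_add]
  by_cases h : p.1.2 = j
  · rw [if_pos (by rw [h]), if_pos h]
  · rw [if_neg (by simp [Prod.ext_iff, h]), if_neg h]

lemma L_fst_pos (α : PlueckerIdx →₀ ℕ) {p : PlueckerIdx} (hp : p ∈ α.support) :
    0 < L α ((0:Fin 2), p.1.1) := by
  classical
  rw [L_apply_fst, Finsupp.sum]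
  have h1 : (if p.1.1 = p.1.1 then α p else 0) ≤
      ∑ q ∈ α.support, (if q.1.1 = p.1.1 then α q else 0) :=
    Finset.single_le_sum (f := fun q => if q.1.1 = p.1.1 then α q else 0)
      (fun i _ => Nat.zero_le _) hp
  rw [if_pos rfl] at h1
  have h2 := Finsupp.mem_support_iff.mp hp
  omega

lemma L_snd_pos (α : PlueckerIdx →₀ ℕ) {p : PlueckerIdx} (hp : p ∈ α.support) :
    0 < L α ((1:Fin 2), p.1.2) := by
  classical
  rw [L_apply_snd, Finsupp.sum]
  have h1 : (if p.1.2 = p.1.2 then α p else 0) ≤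
      ∑ q ∈ α.support, (if q.1.2 = p.1.2 then α q else 0) :=
    Finset.single_le_sum (f := fun q => if q.1.2 = p.1.2 then α q else 0)
      (fun i _ => Nat.zero_le _) hp
  rw [if_pos rfl] at h1
  have h2 := Finsupp.mem_support_iff.mp hp
  omega

lemma L_fst_exists (α : PlueckerIdx →₀ ℕ) {i : Fin 5} (h : 0 < L α ((0:Fin 2), i)) :
    ∃ p ∈ α.support, p.1.1 = i := by
  classical
  by_contra hcon
  push_neg at hcon
  rw [L_apply_fst, Finsupp.sum, Finset.sum_eq_zero (fun q hq => if_neg (hcon q hq))] at h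
  omega

lemma L_snd_exists (α : PlueckerIdx →₀ ℕ) {j : Fin 5} (h : 0 < L α ((1:Fin 2), j)) :
    ∃ p ∈ α.support, p.1.2 = j := by
  classical
  by_contra hcon
  push_neg at hcon
  rw [L_apply_snd, Finsupp.sum, Finset.sum_eq_zero (fun q hq => if_neg (hcon q hq))] at h
  omega

lemma sum_L (α : PlueckerIdx →₀ ℕ) :
    ((L α).sum fun _ n => n) = 2 * α.sum fun _ n => n := by
  induction α using Finsupp.induction with
  | zero =>
    have : L (0 : PlueckerIdx →₀ ℕ) = 0 := Finsupp.sum_zero_index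
    simp [this]
  | single_add p n β hp hn ih =>
    rw [L_add, Finsupp.sum_add_index' (fun _ => rfl) (fun _ _ _ => rfl),
      Finsupp.sum_add_index' (fun _ => rfl) (fun _ _ _ => rfl), ih, L_single,
      Finsupp.sum_add_index' (fun _ => rfl) (fun _ _ _ => rfl),
      Finsupp.sum_single_index rfl, Finsupp.sum_single_index rfl,
      Finsupp.sum_single_index rfl]
    ring

lemma total_eq_zero {α : PlueckerIdx →₀ ℕ} (h : (α.sum fun _ m => m) = 0) : α = 0 := by
  ext p
  simp only [Finsupp.coe_zero, Pi.zero_apply]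
  by_contra hp
  have hp' : p ∈ α.support := Finsupp.mem_support_iff.mpr hp
  rw [Finsupp.sum] at h
  have h3 : α p ≤ ∑ q ∈ α.support, α q :=
    Finset.single_le_sum (f := fun q => α q) (fun i _ => Nat.zero_le _) hp'
  omega

lemma exists_min (α : PlueckerIdx →₀ ℕ) (hstd : Std α) (hne : α.support.Nonempty) :
    ∃ p ∈ α.support, ∀ q ∈ α.support, p.1 ≤ q.1 := by
  obtain ⟨p, hp, hmin⟩ := Finset.exists_min_image α.support
    (fun p => p.1.1.val * 5 + p.1.2.val) hne
  refine ⟨p, hp, fun q hq => ?_⟩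
  rcases hstd p hp q hq with h | h
  · exact h
  · have hk : p.1.1.val * 5 + p.1.2.val ≤ q.1.1.val * 5 + q.1.2.val := hmin q hq
    rw [Prod.le_def] at h ⊢
    rw [Fin.le_def, Fin.le_def] at h ⊢
    have h5 : q.1.2.val < 5 := q.1.2.isLt
    have h5' : p.1.2.val < 5 := p.1.2.isLt
    omega

lemma L_inj : ∀ (n : ℕ) (α β : PlueckerIdx →₀ ℕ), Std α → Std β →
    (α.sum fun _ m => m) = n → L α = L β → α = β := by
  intro n
  induction n with
  | zero =>
    intro α β hα hβ hsum hL
    have hsums : (β.sum fun _ m => m) = 0 := by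
      have h2 := congrArg (fun γ : Fin 2 × Fin 5 →₀ ℕ => γ.sum fun _ n => n) hL
      simp only [sum_L] at h2
      omega
    rw [total_eq_zero hsum, total_eq_zero hsums]
  | succ n IH =>
    intro α β hα hβ hsum hL
    have hsums : (β.sum fun _ m => m) = n + 1 := by
      have h2 := congrArg (fun γ : Fin 2 × Fin 5 →₀ ℕ => γ.sum fun _ n => n) hL
      simp only [sum_L] at h2
      omega
    have hαne : α.support.Nonempty := by
      rw [Finset.nonempty_iff_ne_empty]
      intro hemp
      rw [Finsupp.sum, hemp, Finset.sum_empty] at hsum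
      omega
    have hβne : β.support.Nonempty := by
      rw [Finset.nonempty_iff_ne_empty]
      intro hemp
      rw [Finsupp.sum, hemp, Finset.sum_empty] at hsums
      omega
    obtain ⟨p0, hp0, hpmin⟩ := exists_min α hα hαne
    obtain ⟨q0, hq0, hqmin⟩ := exists_min β hβ hβne
    have h00 : p0 = q0 := by
      have hp1 : 0 < L β ((0:Fin 2), p0.1.1) := by rw [← hL]; exact L_fst_pos α hp0
      have hp2 : 0 < L β ((1:Fin 2), p0.1.2) := by rw [← hL]; exact L_snd_pos α hp0
      have hq1 : 0 < L α ((0:Fin 2), q0.1.1) := by rw [hL]; exact L_fst_pos β hq0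
      have hq2 : 0 < L α ((1:Fin 2), q0.1.2) := by rw [hL]; exact L_snd_pos β hq0
      obtain ⟨q, hq, hqe⟩ := L_fst_exists β hp1
      obtain ⟨q', hq', hqe'⟩ := L_snd_exists β hp2
      obtain ⟨p, hp, hpe⟩ := L_fst_exists α hq1
      obtain ⟨p', hp', hpe'⟩ := L_snd_exists α hq2
      have e1 : q0.1.1 ≤ p0.1.1 := hqe ▸ (Prod.le_def.mp (hqmin q hq)).1
      have e2 : p0.1.1 ≤ q0.1.1 := hpe ▸ (Prod.le_def.mp (hpmin p hp)).1
      have e3 : q0.1.2 ≤ p0.1.2 := hqe' ▸ (Prod.le_def.mp (hqmin q' hq')).2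
      have e4 : p0.1.2 ≤ q0.1.2 := hpe' ▸ (Prod.le_def.mp (hpmin p' hp')).2
      apply Subtype.ext
      rw [Prod.ext_iff]
      exact ⟨le_antisymm e2 e1, le_antisymm e4 e3⟩
    subst h00
    have hgeα : 1 ≤ α p0 := Nat.one_le_iff_ne_zero.mpr (Finsupp.mem_support_iff.mp hp0)
    have hgeβ : 1 ≤ β p0 := Nat.one_le_iff_ne_zero.mpr (Finsupp.mem_support_iff.mp hq0)
    set α' := α - Finsupp.single p0 1 with hα'def
    set β' := β - Finsupp.single p0 1 with hβ'def
    have hdecα : α = Finsupp.single p0 1 + α' := by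
      ext p
      simp only [hα'def, Finsupp.add_apply, Finsupp.tsub_apply, Finsupp.single_apply]
      split_ifs with h
      · subst h; omega
      · omega
    have hdecβ : β = Finsupp.single p0 1 + β' := by
      ext p
      simp only [hβ'def, Finsupp.add_apply, Finsupp.tsub_apply, Finsupp.single_apply]
      split_ifs with h
      · subst h; omega
      · omega
    have hsubα : α'.support ⊆ α.support := by
      intro p hp
      rw [Finsupp.mem_support_iff] at hp ⊢
      intro h0
      apply hp
      rw [hα'def, Finsupp.tsub_apply, h0]
      simp
    have hsubβ : β'.support ⊆ β.support := by
      intro p hp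
      rw [Finsupp.mem_support_iff] at hp ⊢
      intro h0
      apply hp
      rw [hβ'def, Finsupp.tsub_apply, h0]
      simp
    have hstdα' : Std α' := fun p hp q hq => hα p (hsubα hp) q (hsubα hq)
    have hstdβ' : Std β' := fun p hp q hq => hβ p (hsubβ hp) q (hsubβ hq)
    have hLcancel : L α' = L β' := by
      have h2 : L (Finsupp.single p0 1) + L α' = L (Finsupp.single p0 1) + L β' := by
        rw [← L_add, ← L_add, ← hdecα, ← hdecβ, hL]
      ext x
      have h3 := DFunLike.congr_fun h2 x
      simp only [Finsupp.add_apply] at h3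
      omega
    have hsum' : (α'.sum fun _ m => m) = n := by
      rw [hdecα, Finsupp.sum_add_index' (fun _ => rfl) (fun _ _ _ => rfl),
        Finsupp.sum_single_index rfl] at hsum
      omega
    have hβsum' : α' = β' := IH α' β' hstdα' hstdβ' hsum' hLcancel
    rw [hdecα, hdecβ, hβsum']

lemma indep (c : StdIdx →₀ k)
    (h : phi k (c.sum fun i a => a • (monomial i.1 1 : MvPolynomial PlueckerIdx k)) = 0) :
    c = 0 := by
  classical
  by_contra hc
  obtain ⟨i0, hi0, hmax⟩ := Finset.exists_max_image c.support (fun i => W (L i.1))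
    (Finsupp.support_nonempty_iff.mpr hc)
  have hφ : phi k (c.sum fun i a => a • (monomial i.1 1 : MvPolynomial PlueckerIdx k))
      = c.sum fun i a => a • phi k (monomial i.1 1) := by
    rw [map_finsuppSum]
    apply Finsupp.sum_congr
    intro i _
    rw [map_smul]
  rw [hφ] at h
  have hcoeff := congrArg (coeff (L i0.1)) h
  rw [coeff_zero, Finsupp.sum, coeff_sum] at hcoeff
  have hterm : ∀ i ∈ c.support,
      coeff (L i0.1) (c i • phi k (monomial i.1 1)) = if i = i0 then c i0 else 0 := by
    intro i hi
    obtain ⟨r, hre, hr⟩ := Q_monomial k i.1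
    rw [coeff_smul, hre, coeff_add, coeff_monomial]
    by_cases he : i = i0
    · subst he
      have hr0 : coeff (L i.1) r = 0 := by
        by_contra h0
        exact absurd (hr _ (mem_support_iff.mpr h0)) (lt_irrefl _)
      rw [hr0, if_pos rfl, if_pos rfl]
      simp
    · have hLne : L i.1 ≠ L i0.1 := fun hLeq =>
        he (Subtype.ext (L_inj (i.1.sum fun _ m => m) i.1 i0.1 i.2 i0.2 rfl hLeq))
      have hr0 : coeff (L i0.1) r = 0 := by
        by_contra h0
        have hlt := hr _ (mem_support_iff.mpr h0)
        have hle := hmax i hi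
        omega
      rw [hr0, if_neg hLne, if_neg he]
      simp
  rw [Finset.sum_congr rfl hterm, Finset.sum_ite_eq' c.support i0 (fun _ => c i0),
    if_pos hi0] at hcoeff
  exact (Finsupp.mem_support_iff.mp hi0) hcoeff

/-- The submodule sum of the ideal and the span of standard monomials. -/
noncomputable def Vsub : Submodule k (MvPolynomial PlueckerIdx k) :=
  (plueckerIdeal k).restrictScalars k ⊔
    Submodule.span k (Set.range fun i : StdIdx => (monomial i.1 1 : MvPolynomial PlueckerIdx k))


/-- convenient constructor for variables -/
abbrev ii (i j : Fin 5) (h : (i:Fin 5) < j := by decide) : PlueckerIdx := ⟨(i,j), h⟩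

lemma X_mul_X_mul_monomial (a b : PlueckerIdx) (α : PlueckerIdx →₀ ℕ) :
    (X a : MvPolynomial PlueckerIdx k) * X b * monomial α 1
      = monomial (Finsupp.single a 1 + Finsupp.single b 1 + α) 1 := by
  rw [← pow_one (X a : MvPolynomial PlueckerIdx k), ← pow_one (X b : MvPolynomial PlueckerIdx k),
    X_pow_eq_monomial, X_pow_eq_monomial, monomial_mul, monomial_mul, one_mul, one_mul]

lemma reduce (α : PlueckerIdx →₀ ℕ) (a b cc d e f : PlueckerIdx) (m : Fin 5)
    (hab : a ≠ b) (ha : a ∈ α.support) (hb : b ∈ α.support)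
    (hrel : (X a * X b : MvPolynomial PlueckerIdx k) - (X cc * X d - X e * X f) = pfaffian k m)
    (h1 : w cc + w d < w a + w b) (h2 : w e + w f < w a + w b)
    (IH : ∀ β : PlueckerIdx →₀ ℕ, mu β < mu α →
      (monomial β 1 : MvPolynomial PlueckerIdx k) ∈ Vsub k) :
    (monomial α 1 : MvPolynomial PlueckerIdx k) ∈ Vsub k := by
  classical
  set α' := α - Finsupp.single a 1 - Finsupp.single b 1 with hα'
  have hga : 1 ≤ α a := Nat.one_le_iff_ne_zero.mpr (Finsupp.mem_support_iff.mp ha)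
  have hgb : 1 ≤ α b := Nat.one_le_iff_ne_zero.mpr (Finsupp.mem_support_iff.mp hb)
  have hdec : α = Finsupp.single a 1 + Finsupp.single b 1 + α' := by
    ext p
    simp only [hα', Finsupp.add_apply, Finsupp.tsub_apply, Finsupp.single_apply]
    rcases eq_or_ne a p with rfl | hne1
    · rw [if_pos rfl, if_neg (fun h : b = a => hab h.symm)]
      omega
    · rcases eq_or_ne b p with rfl | hne2
      · rw [if_neg hne1, if_pos rfl]
        omega
      · rw [if_neg hne1, if_neg hne2]
        omega
  have hmuα : mu α = w a + w b + mu α' := by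
    rw [hdec, mu_add, mu_add, mu_single, mu_single]
    ring
  have key : (monomial α 1 : MvPolynomial PlueckerIdx k) =
      pfaffian k m * monomial α' 1
      + monomial (Finsupp.single cc 1 + Finsupp.single d 1 + α') 1
      - monomial (Finsupp.single e 1 + Finsupp.single f 1 + α') 1 := by
    rw [← X_mul_X_mul_monomial, ← X_mul_X_mul_monomial, ← hrel, hdec, ← X_mul_X_mul_monomial]
    ring
  rw [key]
  apply Submodule.sub_mem
  · apply Submodule.add_mem
    · have hI : pfaffian k m * monomial α' 1 ∈ plueckerIdeal k :=
        Ideal.mul_mem_right _ _ (Ideal.subset_span (Set.mem_range_self m))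
      exact Submodule.mem_sup_left hI
    · apply IH
      rw [mu_add, mu_add, mu_single, mu_single, hmuα]
      omega
  · apply IH
    rw [mu_add, mu_add, mu_single, mu_single, hmuα]
    omega

lemma classify (p q : PlueckerIdx) (h1 : ¬ p.1 ≤ q.1) (h2 : ¬ q.1 ≤ p.1) :
    ((p.1 = ((0:Fin 5),(3:Fin 5)) ∧ q.1 = (1,2)) ∨ (p.1 = (1,2) ∧ q.1 = (0,3))) ∨
    ((p.1 = (0,4) ∧ q.1 = (1,2)) ∨ (p.1 = (1,2) ∧ q.1 = (0,4))) ∨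
    ((p.1 = (0,4) ∧ q.1 = (1,3)) ∨ (p.1 = (1,3) ∧ q.1 = (0,4))) ∨
    ((p.1 = (0,4) ∧ q.1 = (2,3)) ∨ (p.1 = (2,3) ∧ q.1 = (0,4))) ∨
    ((p.1 = (1,4) ∧ q.1 = (2,3)) ∨ (p.1 = (2,3) ∧ q.1 = (1,4))) := by
  revert h1 h2
  revert p q
  decide

lemma monomial_mem_Vsub (α : PlueckerIdx →₀ ℕ) : (monomial α 1 : MvPolynomial PlueckerIdx k) ∈ Vsub k := by
  classical
  suffices H : ∀ (N : ℕ) (α : PlueckerIdx →₀ ℕ), mu α = N →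
      (monomial α 1 : MvPolynomial PlueckerIdx k) ∈ Vsub k from H (mu α) α rfl
  intro N
  induction N using Nat.strong_induction_on with
  | _ N IHN =>
    intro α hN
    by_cases hstd : Std α
    · exact Submodule.mem_sup_right (Submodule.subset_span ⟨⟨α, hstd⟩, rfl⟩)
    · rw [Std] at hstd
      push_neg at hstd
      obtain ⟨p, hp, q, hq, hcomp⟩ := hstd
      have hc1 : ¬ p.1 ≤ q.1 := hcomp.1
      have hc2 : ¬ q.1 ≤ p.1 := hcomp.2
      have IH : ∀ β : PlueckerIdx →₀ ℕ, mu β < mu α →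
          (monomial β 1 : MvPolynomial PlueckerIdx k) ∈ Vsub k := by
        intro β hβ
        exact IHN (mu β) (by rw [← hN]; exact hβ) β rfl
      have memof : ∀ (r v : PlueckerIdx), r ∈ α.support → r.1 = v.1 → v ∈ α.support := by
        intro r v hr hv
        rwa [Subtype.ext hv] at hr
      rcases classify p q hc1 hc2 with h | h | h | h | h
      · have ha : (ii 0 3) ∈ α.support := by
          rcases h with ⟨h1, h2⟩ | ⟨h1, h2⟩
          · exact memof p _ hp h1
          · exact memof q _ hq h2
        have hb : (ii 1 2) ∈ α.support := by
          rcases h with ⟨h1, h2⟩ | ⟨h1, h2⟩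
          · exact memof q _ hq h2
          · exact memof p _ hp h1
        exact reduce k α (ii 0 3) (ii 1 2) (ii 0 2) (ii 1 3) (ii 0 1) (ii 2 3) 4
          (by decide) ha hb (by simp only [pfaffian, xv]; ring) (by decide) (by decide) IH
      · have ha : (ii 0 4) ∈ α.support := by
          rcases h with ⟨h1, h2⟩ | ⟨h1, h2⟩
          · exact memof p _ hp h1
          · exact memof q _ hq h2
        have hb : (ii 1 2) ∈ α.support := by
          rcases h with ⟨h1, h2⟩ | ⟨h1, h2⟩
          · exact memof q _ hq h2
          · exact memof p _ hp h1
        exact reduce k α (ii 0 4) (ii 1 2) (ii 0 2) (ii 1 4) (ii 0 1) (ii 2 4) 3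
          (by decide) ha hb (by simp only [pfaffian, xv]; ring) (by decide) (by decide) IH
      · have ha : (ii 0 4) ∈ α.support := by
          rcases h with ⟨h1, h2⟩ | ⟨h1, h2⟩
          · exact memof p _ hp h1
          · exact memof q _ hq h2
        have hb : (ii 1 3) ∈ α.support := by
          rcases h with ⟨h1, h2⟩ | ⟨h1, h2⟩
          · exact memof q _ hq h2
          · exact memof p _ hp h1
        exact reduce k α (ii 0 4) (ii 1 3) (ii 0 3) (ii 1 4) (ii 0 1) (ii 3 4) 2
          (by decide) ha hb (by simp only [pfaffian, xv]; ring) (by decide) (by decide) IH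
      · have ha : (ii 0 4) ∈ α.support := by
          rcases h with ⟨h1, h2⟩ | ⟨h1, h2⟩
          · exact memof p _ hp h1
          · exact memof q _ hq h2
        have hb : (ii 2 3) ∈ α.support := by
          rcases h with ⟨h1, h2⟩ | ⟨h1, h2⟩
          · exact memof q _ hq h2
          · exact memof p _ hp h1
        exact reduce k α (ii 0 4) (ii 2 3) (ii 0 3) (ii 2 4) (ii 0 2) (ii 3 4) 1
          (by decide) ha hb (by simp only [pfaffian, xv]; ring) (by decide) (by decide) IH
      · have ha : (ii 1 4) ∈ α.support := by
          rcases h with ⟨h1, h2⟩ | ⟨h1, h2⟩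
          · exact memof p _ hp h1
          · exact memof q _ hq h2
        have hb : (ii 2 3) ∈ α.support := by
          rcases h with ⟨h1, h2⟩ | ⟨h1, h2⟩
          · exact memof q _ hq h2
          · exact memof p _ hp h1
        exact reduce k α (ii 1 4) (ii 2 3) (ii 1 3) (ii 2 4) (ii 1 2) (ii 3 4) 0
          (by decide) ha hb (by simp only [pfaffian, xv]; ring) (by decide) (by decide) IH

lemma Vsub_eq_top : Vsub k = ⊤ := by
  rw [eq_top_iff]
  intro f _
  rw [f.as_sum]
  apply Submodule.sum_mem
  intro v _
  have hsm : (monomial v (coeff v f) : MvPolynomial PlueckerIdx k) = coeff v f • monomial v 1 := by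
    rw [smul_monomial, smul_eq_mul, mul_one]
  rw [hsm]
  exact Submodule.smul_mem _ _ (monomial_mem_Vsub k v)

lemma ker_eq : RingHom.ker (phi k) = plueckerIdeal k := by
  have ker_le : plueckerIdeal k ≤ RingHom.ker (phi k) := by
    rw [plueckerIdeal, Ideal.span_le]
    rintro _ ⟨m, rfl⟩
    simp only [SetLike.mem_coe, RingHom.mem_ker]
    exact phi_pfaffian k m
  apply le_antisymm _ ker_le
  intro f hf
  have hf0 : phi k f = 0 := hf
  have hmem : f ∈ Vsub k := by rw [Vsub_eq_top]; trivial
  rw [Vsub, Submodule.mem_sup] at hmem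
  obtain ⟨i, hi, s, hs, rfl⟩ := hmem
  have hi' : i ∈ plueckerIdeal k := hi
  rw [Finsupp.mem_span_range_iff_exists_finsupp] at hs
  obtain ⟨c, rfl⟩ := hs
  have hφi : phi k i = 0 := ker_le hi'
  rw [map_add, hφi, zero_add] at hf0
  have hc : c = 0 := indep k c hf0
  subst hc
  rw [Finsupp.sum_zero_index, add_zero]
  exact hi'

end PlueckerAux

theorem stmt4 :
    (plueckerIdeal k).IsPrime ∧
      IsDomain (MvPolynomial PlueckerIdx k ⧸ plueckerIdeal k) := by
  have h : (plueckerIdeal k).IsPrime := by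
    rw [← PlueckerAux.ker_eq k]
    exact RingHom.ker_isPrime _
  exact ⟨h, (Ideal.Quotient.isDomain_iff_prime _).mpr h⟩
end
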